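/- arXiv:1108.1171 — 4 statements merged into one kernel-verified Lean document; each statement's English description precedes it below -/
import Mathlib

section
/- For any prime p ≥ 7, the sum over k from 1 to p-1 of H_k^2/k^2 is congruent to 0 modulo p, as p-integral rational numbers. -/
open Finset

/-- A number in `(0, 3P)` divisible by `P` is `P` or `2P`. -/
lemma dvd_window {P E : ℕ} (h0 : 0 < E) (h2 : E < 3 * P) (hd : P ∣ E) :
    E = P ∨ E = 2 * P := by
  obtain ⟨q, rfl⟩ := hd
  have hq3 : q < 3 := by
    by_contra h
    push_neg at h
    exact absurd (Nat.mul_le_mul_left P h) (by omega)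
  interval_cases q <;> omega

/-- mod-p Bernoulli numbers (`B⁺` convention), defined by recursion. -/
noncomputable def bmod (p : ℕ) [Fact p.Prime] : ℕ → ZMod p
  | m => (m + 1 : ZMod p)⁻¹ *
      ((m + 1 : ZMod p) - ∑ r ∈ (Finset.range m).attach,
        (((m + 1).choose r.1 : ℕ) : ZMod p) * bmod p r.1)
  decreasing_by exact Finset.mem_range.mp r.2

lemma bmod_rec (p : ℕ) [Fact p.Prime] (m : ℕ) (hM : ((m + 1 : ℕ) : ZMod p) ≠ 0) :
    ∑ r ∈ Finset.range (m + 1), (((m + 1).choose r : ℕ) : ZMod p) * bmod p r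
      = ((m + 1 : ℕ) : ZMod p) := by
  rw [Finset.sum_range_succ]
  have h1 : (m + 1).choose m = m + 1 := Nat.choose_succ_self_right m
  rw [h1]
  rw [show bmod p m = (m + 1 : ZMod p)⁻¹ *
      ((m + 1 : ZMod p) - ∑ r ∈ (Finset.range m).attach,
        (((m + 1).choose r.1 : ℕ) : ZMod p) * bmod p r.1) from by rw [bmod]]
  rw [Finset.sum_attach (Finset.range m) (fun r => (((m + 1).choose r : ℕ) : ZMod p) * bmod p r)]
  push_cast
  have hM' : ((m : ZMod p) + 1) ≠ 0 := by push_cast at hM; exact hM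
  rw [← mul_assoc]
  rw [mul_inv_cancel₀ hM', one_mul]
  ring

lemma cast_ne_zero_of_lt {p k : ℕ} [NeZero p] (h0 : 0 < k) (hk : k < p) :
    ((k : ℕ) : ZMod p) ≠ 0 := by
  rw [Ne, ZMod.natCast_eq_zero_iff]
  intro h
  exact absurd (Nat.le_of_dvd h0 h) (by omega)

lemma sum_cast_range_pow (p : ℕ) [NeZero p] (e : ℕ) :
    ∑ k ∈ Finset.range p, ((k : ℕ) : ZMod p) ^ e = ∑ x : ZMod p, x ^ e := by
  apply Finset.sum_nbij' (fun k => ((k : ℕ) : ZMod p)) (fun x => x.val)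
  · intro a _; exact Finset.mem_univ _
  · intro x _; exact Finset.mem_range.mpr (ZMod.val_lt x)
  · intro a ha; exact ZMod.val_cast_of_lt (Finset.mem_range.mp ha)
  · intro x _; exact ZMod.natCast_zmod_val x
  · intro a _; rfl

lemma sum_pow_Icc (p : ℕ) [hp : Fact p.Prime] (e : ℕ) (he : 0 < e) :
    ∑ k ∈ Finset.Icc 1 (p - 1), ((k : ℕ) : ZMod p) ^ e
      = if (p - 1) ∣ e then (-1 : ZMod p) else 0 := by
  have hp2 : 2 ≤ p := hp.out.two_le
  have h0 : ∑ k ∈ Finset.Icc 1 (p - 1), ((k : ℕ) : ZMod p) ^ e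
      = ∑ k ∈ Finset.range p, ((k : ℕ) : ZMod p) ^ e := by
    rw [show Finset.range p = insert 0 (Finset.Icc 1 (p - 1)) from by
      ext x; simp only [Finset.mem_range, Finset.mem_insert, Finset.mem_Icc]; omega]
    rw [Finset.sum_insert (by simp)]
    simp [zero_pow (by omega : e ≠ 0)]
  rw [h0, sum_cast_range_pow]
  have hcard : Fintype.card (ZMod p) = p := ZMod.card p
  by_cases h : (p - 1) ∣ e
  · obtain ⟨c, hc⟩ := id h
    have hterm : ∀ x : ZMod p, x ^ e = if x = 0 then 0 else 1 := by
      intro x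
      by_cases hx : x = 0
      · simp [hx, zero_pow (by omega : e ≠ 0)]
      · simp only [hx, if_false, hc, pow_mul, ZMod.pow_card_sub_one_eq_one hx, one_pow]
    simp only [hterm]
    rw [if_pos h, Finset.sum_ite, Finset.sum_const, Finset.sum_const, smul_zero, zero_add]
    have hfil : Finset.filter (fun x : ZMod p => ¬ x = 0) Finset.univ
        = Finset.univ.erase 0 := by
      ext x
      simp [Finset.mem_erase, Finset.mem_filter, and_comm]
    rw [hfil, Finset.card_erase_of_mem (Finset.mem_univ _), Finset.card_univ, hcard,
      nsmul_eq_mul, mul_one, Nat.cast_sub (by omega : 1 ≤ p)]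
    simp [ZMod.natCast_self]
  · set e' := e % (p - 1) with he'
    have he'0 : e' ≠ 0 := fun hh => h (Nat.dvd_of_mod_eq_zero hh)
    have he'lt : e' < p - 1 := Nat.mod_lt _ (by omega)
    have hterm : ∀ x : ZMod p, x ^ e = x ^ e' := by
      intro x
      by_cases hx : x = 0
      · rw [hx, zero_pow (by omega : e ≠ 0), zero_pow he'0]
      · conv_lhs => rw [show e = (p - 1) * (e / (p - 1)) + e' from by
          rw [he', Nat.div_add_mod]]
        rw [pow_add, pow_mul, ZMod.pow_card_sub_one_eq_one hx, one_pow, one_mul]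
    simp only [hterm]
    rw [if_neg h]
    have := FiniteField.sum_pow_lt_card_sub_one (K := ZMod p) e'
      (by rw [ZMod.card]; omega)
    exact this

lemma binom_expand {R : Type*} [CommRing R] (x : R) (M : ℕ) :
    (x + 1) ^ M = ∑ t ∈ Finset.range (M + 1), (M.choose t : R) * x ^ t := by
  rw [add_pow]
  apply Finset.sum_congr rfl
  intro t _
  push_cast
  ring

lemma binom_diff {R : Type*} [CommRing R] (x : R) (M : ℕ) :
    (x + 1) ^ M - x ^ M = ∑ t ∈ Finset.range M, (M.choose t : R) * x ^ t := by
  rw [binom_expand, Finset.sum_range_succ, Nat.choose_self]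
  push_cast
  ring

lemma tri_swap {R : Type*} [AddCommMonoid R] (N : ℕ) (f : ℕ → ℕ → R) :
    ∑ r ∈ Finset.range N, ∑ t ∈ Finset.range (N - r), f r t
      = ∑ t ∈ Finset.range N, ∑ r ∈ Finset.range (N - t), f r t := by
  have key : ∀ g : ℕ → ℕ → R, ∑ r ∈ Finset.range N, ∑ t ∈ Finset.range (N - r), g r t
      = ∑ r ∈ Finset.range N, ∑ t ∈ Finset.range N, if r + t < N then g r t else 0 := by
    intro g
    apply Finset.sum_congr rfl
    intro r hr
    rw [← Finset.sum_filter]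
    congr 1
    ext t
    simp only [Finset.mem_filter, Finset.mem_range]
    have := Finset.mem_range.mp hr
    omega
  rw [key f, key (fun t r => f r t), Finset.sum_comm]
  apply Finset.sum_congr rfl
  intro t _
  apply Finset.sum_congr rfl
  intro r _
  exact if_congr (by omega) rfl rfl

lemma choose_tri (m r t : ℕ) :
    (m + 1).choose r * (m + 1 - r).choose t = (m + 1).choose t * (m + 1 - t).choose r := by
  by_cases h : r + t ≤ m + 1
  · have h1 := Nat.choose_mul (n := m + 1) (k := r + t) (s := r) (Nat.le_add_right r t)
    have h2 := Nat.choose_mul (n := m + 1) (k := r + t) (s := t) (Nat.le_add_left t r)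
    rw [Nat.add_sub_cancel_left] at h1
    rw [Nat.add_sub_cancel] at h2
    have h3 : (r + t).choose r = (r + t).choose t := by
      rw [← Nat.choose_symm (Nat.le_add_left t r)]
      congr 1
      omega
    rw [← h1, ← h2, h3]
  · push_neg at h
    rcases Nat.lt_or_ge (m + 1) r with hr | hr
    · rw [Nat.choose_eq_zero_of_lt hr]
      have : m + 1 - t < r := by omega
      rw [Nat.choose_eq_zero_of_lt this]
      simp
    · have : m + 1 - r < t := by omega
      rw [Nat.choose_eq_zero_of_lt this]
      have h2 : m + 1 < t ∨ t ≤ m + 1 := by omega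
      rcases Nat.lt_or_ge (m + 1) t with ht | ht
      · rw [Nat.choose_eq_zero_of_lt ht]
        simp
      · have : m + 1 - t < r := by omega
        rw [Nat.choose_eq_zero_of_lt this]
        simp

lemma keystep (p : ℕ) [Fact p.Prime] (m : ℕ) (hm : m + 1 < p) (x : ZMod p) :
    ∑ r ∈ Finset.range (m + 1),
        (((m + 1).choose r : ℕ) : ZMod p) * bmod p r * ((x + 1) ^ (m + 1 - r) - x ^ (m + 1 - r))
      = ((m + 1 : ℕ) : ZMod p) * (x + 1) ^ m := by
  have step1 : ∀ r ∈ Finset.range (m + 1),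
      (((m + 1).choose r : ℕ) : ZMod p) * bmod p r * ((x + 1) ^ (m + 1 - r) - x ^ (m + 1 - r))
        = ∑ t ∈ Finset.range (m + 1 - r),
            ((((m + 1).choose r * (m + 1 - r).choose t : ℕ)) : ZMod p) * bmod p r * x ^ t := by
    intro r _
    rw [binom_diff, Finset.mul_sum]
    apply Finset.sum_congr rfl
    intro t _
    push_cast
    ring
  rw [Finset.sum_congr rfl step1]
  rw [tri_swap]
  have step2 : ∀ t ∈ Finset.range (m + 1),
      (∑ r ∈ Finset.range (m + 1 - t),
        ((((m + 1).choose r * (m + 1 - r).choose t : ℕ)) : ZMod p) * bmod p r * x ^ t)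
      = (((m + 1).choose t : ℕ) : ZMod p) * ((m + 1 - t : ℕ) : ZMod p) * x ^ t := by
    intro t ht
    have htm : t ≤ m := by have := Finset.mem_range.mp ht; omega
    have hrw : ∀ r ∈ Finset.range (m + 1 - t),
        ((((m + 1).choose r * (m + 1 - r).choose t : ℕ)) : ZMod p) * bmod p r * x ^ t
        = (((m + 1).choose t : ℕ) : ZMod p) * x ^ t *
            ((((m + 1 - t).choose r : ℕ)) : ZMod p) * bmod p r := by
      intro r _
      rw [choose_tri]
      push_cast
      ring
    rw [Finset.sum_congr rfl hrw]
    have : ∑ r ∈ Finset.range (m + 1 - t),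
        (((m + 1).choose t : ℕ) : ZMod p) * x ^ t * ((((m + 1 - t).choose r : ℕ)) : ZMod p) * bmod p r
        = (((m + 1).choose t : ℕ) : ZMod p) * x ^ t *
          ∑ r ∈ Finset.range (m + 1 - t), ((((m + 1 - t).choose r : ℕ)) : ZMod p) * bmod p r := by
      rw [Finset.mul_sum]
      apply Finset.sum_congr rfl
      intro r _
      ring
    rw [this]
    have hmt : m + 1 - t = (m - t) + 1 := by omega
    rw [hmt, bmod_rec p (m - t) (cast_ne_zero_of_lt (by omega) (by omega))]
    ring
  rw [Finset.sum_congr rfl step2]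
  have step3 : ∀ t ∈ Finset.range (m + 1),
      (((m + 1).choose t : ℕ) : ZMod p) * ((m + 1 - t : ℕ) : ZMod p) * x ^ t
        = ((m + 1 : ℕ) : ZMod p) * ((m.choose t : ℕ) : ZMod p) * x ^ t := by
    intro t _
    have h := Nat.choose_mul_succ_eq m t
    have : ((m.choose t * (m + 1) : ℕ) : ZMod p) = (((m + 1).choose t * (m + 1 - t) : ℕ) : ZMod p) := by
      rw [h]
    push_cast at this
    push_cast
    linear_combination (x ^ t) * this.symm
  rw [Finset.sum_congr rfl step3]
  rw [binom_expand x m, Finset.mul_sum]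
  apply Finset.sum_congr rfl
  intro t _
  push_cast
  ring

lemma faulhaber (p : ℕ) [Fact p.Prime] (m : ℕ) (hm : m + 1 < p) (n : ℕ) :
    ((m + 1 : ℕ) : ZMod p) * ∑ i ∈ Finset.Icc 1 n, ((i : ℕ) : ZMod p) ^ m
      = ∑ r ∈ Finset.range (m + 1),
          (((m + 1).choose r : ℕ) : ZMod p) * bmod p r * ((n : ℕ) : ZMod p) ^ (m + 1 - r) := by
  induction n with
  | zero =>
    rw [show Finset.Icc 1 0 = (∅ : Finset ℕ) from by simp]
    rw [Finset.sum_empty, mul_zero]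
    symm
    apply Finset.sum_eq_zero
    intro r hr
    rw [Nat.cast_zero, zero_pow (by have := Finset.mem_range.mp hr; omega : m + 1 - r ≠ 0),
      mul_zero]
  | succ n ih =>
    rw [Finset.sum_Icc_succ_top (by omega : 1 ≤ n + 1), mul_add, ih]
    have hcast : ((n + 1 : ℕ) : ZMod p) = ((n : ℕ) : ZMod p) + 1 := by push_cast; ring
    rw [hcast]
    have hk := keystep p m hm ((n : ℕ) : ZMod p)
    have hk2 : (∑ r ∈ Finset.range (m + 1),
          (((m + 1).choose r : ℕ) : ZMod p) * bmod p r * (((n : ℕ) : ZMod p) + 1) ^ (m + 1 - r))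
        - (∑ r ∈ Finset.range (m + 1),
          (((m + 1).choose r : ℕ) : ZMod p) * bmod p r * ((n : ℕ) : ZMod p) ^ (m + 1 - r))
        = ((m + 1 : ℕ) : ZMod p) * (((n : ℕ) : ZMod p) + 1) ^ m := by
      rw [← Finset.sum_sub_distrib, ← hk]
      apply Finset.sum_congr rfl
      intro r _
      ring
    linear_combination -hk2

lemma choose_p1 (p : ℕ) [hp : Fact p.Prime] (r : ℕ) (hr : r ≤ p - 1) :
    (((p - 1).choose r : ℕ) : ZMod p) = (-1) ^ r := by
  induction r with
  | zero => simp
  | succ r ih =>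
    have hp2 : 2 ≤ p := hp.out.two_le
    have hr' : r ≤ p - 1 := by omega
    have hpas : p.choose (r + 1) = (p - 1).choose r + (p - 1).choose (r + 1) := by
      conv_lhs => rw [show p = (p - 1) + 1 from by omega]
      rw [Nat.choose_succ_succ]
    have hdvd : p ∣ p.choose (r + 1) := hp.out.dvd_choose_self (by omega) (by omega)
    have hcast : ((p.choose (r + 1) : ℕ) : ZMod p) = 0 :=
      (ZMod.natCast_eq_zero_iff _ _).mpr hdvd
    rw [hpas] at hcast
    push_cast at hcast
    rw [ih hr'] at hcast
    linear_combination hcast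

lemma choose_p2 (p : ℕ) [hp : Fact p.Prime] (s : ℕ) (hs : s ≤ p - 2) :
    (((p - 2).choose s : ℕ) : ZMod p) = (-1) ^ s * ((s + 1 : ℕ) : ZMod p) := by
  induction s with
  | zero => simp
  | succ s ih =>
    have hp2 : 2 ≤ p := hp.out.two_le
    have hs' : s ≤ p - 2 := by omega
    have hpas : (p - 1).choose (s + 1) = (p - 2).choose s + (p - 2).choose (s + 1) := by
      conv_lhs => rw [show p - 1 = (p - 2) + 1 from by omega]
      rw [Nat.choose_succ_succ]
    have hc1 : (((p - 1).choose (s + 1) : ℕ) : ZMod p) = (-1) ^ (s + 1) :=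
      choose_p1 p (s + 1) (by omega)
    rw [hpas] at hc1
    push_cast at hc1 ⊢
    rw [ih hs'] at hc1
    push_cast at hc1
    linear_combination hc1

lemma identity_I1 {F : Type*} [CommRing F] (a : ℕ → F) (n : ℕ) :
    2 * ∑ k ∈ Finset.Icc 1 n, (∑ i ∈ Finset.Icc 1 k, a i) * a k
      = (∑ i ∈ Finset.Icc 1 n, a i) ^ 2 + ∑ i ∈ Finset.Icc 1 n, (a i) ^ 2 := by
  induction n with
  | zero => simp [show Finset.Icc 1 0 = (∅ : Finset ℕ) from by simp]
  | succ n ih =>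
    have h1 : (1 : ℕ) ≤ n + 1 := by omega
    rw [Finset.sum_Icc_succ_top h1 (fun k => (∑ i ∈ Finset.Icc 1 k, a i) * a k),
      Finset.sum_Icc_succ_top h1 a, Finset.sum_Icc_succ_top h1 (fun i => (a i) ^ 2)]
    linear_combination ih

lemma identity_I3 {F : Type*} [CommRing F] (a : ℕ → F) (n : ℕ) :
    2 * ∑ k ∈ Finset.Icc 1 n, (∑ i ∈ Finset.Icc 1 k, a i) ^ 2 * (a k) ^ 2
      + 4 * ∑ k ∈ Finset.Icc 1 n,
          (∑ i ∈ Finset.Icc 1 k, a i) * (∑ i ∈ Finset.Icc 1 k, (a i) ^ 2) * a k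
      = 2 * (∑ i ∈ Finset.Icc 1 n, a i) ^ 2 * (∑ i ∈ Finset.Icc 1 n, (a i) ^ 2)
        + (∑ i ∈ Finset.Icc 1 n, (a i) ^ 2) ^ 2 - (∑ i ∈ Finset.Icc 1 n, (a i) ^ 4)
        + 4 * ∑ k ∈ Finset.Icc 1 n, (∑ i ∈ Finset.Icc 1 k, a i) * (a k) ^ 3 := by
  induction n with
  | zero => simp [show Finset.Icc 1 0 = (∅ : Finset ℕ) from by simp]
  | succ n ih =>
    have h1 : (1 : ℕ) ≤ n + 1 := by omega
    rw [Finset.sum_Icc_succ_top h1 (fun k => (∑ i ∈ Finset.Icc 1 k, a i) ^ 2 * (a k) ^ 2),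
      Finset.sum_Icc_succ_top h1
        (fun k => (∑ i ∈ Finset.Icc 1 k, a i) * (∑ i ∈ Finset.Icc 1 k, (a i) ^ 2) * a k),
      Finset.sum_Icc_succ_top h1 (fun k => (∑ i ∈ Finset.Icc 1 k, a i) * (a k) ^ 3),
      Finset.sum_Icc_succ_top h1 a, Finset.sum_Icc_succ_top h1 (fun i => (a i) ^ 2),
      Finset.sum_Icc_succ_top h1 (fun i => (a i) ^ 4)]
    linear_combination ih

section Extract

variable {p : ℕ} [hp : Fact p.Prime]

lemma extract_single (u : ℕ → ZMod p) (e : ℕ → ℕ) (R w : ℕ)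
    (hpos : ∀ r ∈ Finset.range R, 0 < e r + w) :
    ∑ k ∈ Finset.Icc 1 (p - 1), (∑ r ∈ Finset.range R, u r * ((k : ℕ) : ZMod p) ^ (e r))
        * ((k : ℕ) : ZMod p) ^ w
      = ∑ r ∈ Finset.range R, u r * (if (p - 1) ∣ (e r + w) then (-1 : ZMod p) else 0) := by
  have hk : ∀ k ∈ Finset.Icc 1 (p - 1),
      (∑ r ∈ Finset.range R, u r * ((k : ℕ) : ZMod p) ^ (e r)) * ((k : ℕ) : ZMod p) ^ w
      = ∑ r ∈ Finset.range R, u r * ((k : ℕ) : ZMod p) ^ (e r + w) := by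
    intro k _
    rw [Finset.sum_mul]
    apply Finset.sum_congr rfl
    intro r _
    rw [pow_add]
    ring
  rw [Finset.sum_congr rfl hk, Finset.sum_comm]
  apply Finset.sum_congr rfl
  intro r hr
  rw [← Finset.mul_sum, sum_pow_Icc p _ (hpos r hr)]

lemma extract_double (u v : ℕ → ZMod p) (e f : ℕ → ℕ) (R S w : ℕ)
    (hpos : ∀ r ∈ Finset.range R, ∀ s ∈ Finset.range S, 0 < e r + (f s + w)) :
    ∑ k ∈ Finset.Icc 1 (p - 1),
        (∑ r ∈ Finset.range R, u r * ((k : ℕ) : ZMod p) ^ (e r))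
        * (∑ s ∈ Finset.range S, v s * ((k : ℕ) : ZMod p) ^ (f s))
        * ((k : ℕ) : ZMod p) ^ w
      = ∑ r ∈ Finset.range R, ∑ s ∈ Finset.range S,
          u r * v s * (if (p - 1) ∣ (e r + (f s + w)) then (-1 : ZMod p) else 0) := by
  have hk : ∀ k ∈ Finset.Icc 1 (p - 1),
      (∑ r ∈ Finset.range R, u r * ((k : ℕ) : ZMod p) ^ (e r))
        * (∑ s ∈ Finset.range S, v s * ((k : ℕ) : ZMod p) ^ (f s))
        * ((k : ℕ) : ZMod p) ^ w
      = ∑ r ∈ Finset.range R, ∑ s ∈ Finset.range S,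
          u r * v s * ((k : ℕ) : ZMod p) ^ (e r + (f s + w)) := by
    intro k _
    rw [Finset.sum_mul_sum, Finset.sum_mul]
    apply Finset.sum_congr rfl
    intro r _
    rw [Finset.sum_mul]
    apply Finset.sum_congr rfl
    intro s _
    rw [pow_add, pow_add]
    ring
  rw [Finset.sum_congr rfl hk, Finset.sum_comm]
  apply Finset.sum_congr rfl
  intro r hr
  rw [Finset.sum_comm]
  apply Finset.sum_congr rfl
  intro s hs
  rw [← Finset.mul_sum, sum_pow_Icc p _ (hpos r hr s hs)]

lemma collapse_gen (u : ℕ → ZMod p) (P : ℕ → Prop) [DecidablePred P] (R r₀ : ℕ)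
    (hr₀ : r₀ ∈ Finset.range R) (hiff : ∀ r ∈ Finset.range R, P r ↔ r = r₀) :
    ∑ r ∈ Finset.range R, u r * (if P r then (-1 : ZMod p) else 0) = -u r₀ := by
  have h1 : ∀ r ∈ Finset.range R,
      u r * (if P r then (-1 : ZMod p) else 0) = if r = r₀ then -u r else 0 := by
    intro r hr
    by_cases h : r = r₀
    · rw [if_pos ((hiff r hr).mpr h), if_pos h]; ring
    · rw [if_neg (fun hd => h ((hiff r hr).mp hd)), if_neg h, mul_zero]
  rw [Finset.sum_congr rfl h1, Finset.sum_ite_eq' (Finset.range R) r₀ (fun r => -u r),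
    if_pos hr₀]

lemma collapse_none (u : ℕ → ZMod p) (P : ℕ → Prop) [DecidablePred P] (R : ℕ)
    (hnone : ∀ r ∈ Finset.range R, ¬ P r) :
    ∑ r ∈ Finset.range R, u r * (if P r then (-1 : ZMod p) else 0) = 0 := by
  apply Finset.sum_eq_zero
  intro r hr
  rw [if_neg (hnone r hr), mul_zero]

end Extract

noncomputable def cc (p : ℕ) [Fact p.Prime] (r : ℕ) : ZMod p :=
  (((p - 1).choose r : ℕ) : ZMod p) * bmod p r

noncomputable def dd (p : ℕ) [Fact p.Prime] (s : ℕ) : ZMod p :=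
  (((p - 2).choose s : ℕ) : ZMod p) * bmod p s

theorem mainT (p : ℕ) [hp : Fact p.Prime] (h7 : 7 ≤ p) :
    ∑ k ∈ Finset.Icc 1 (p - 1),
        (∑ i ∈ Finset.Icc 1 k, ((i : ℕ) : ZMod p)⁻¹) ^ 2 * (((k : ℕ) : ZMod p)⁻¹) ^ 2 = 0 := by
  have hm1 : ((p - 1 : ℕ) : ZMod p) = -1 := by
    rw [Nat.cast_sub (by omega), ZMod.natCast_self, Nat.cast_one, zero_sub]
  have hm2 : ((p - 2 : ℕ) : ZMod p) = -2 := by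
    rw [Nat.cast_sub (by omega), ZMod.natCast_self]
    push_cast
    ring
  have hne : ∀ i : ℕ, 1 ≤ i → i ≤ p - 1 → ((i : ℕ) : ZMod p) ≠ 0 := fun i h1 h2 =>
    cast_ne_zero_of_lt (by omega) (by omega)
  have hinv : ∀ j e : ℕ, j + e = p - 1 → ∀ i : ℕ, 1 ≤ i → i ≤ p - 1 →
      (((i : ℕ) : ZMod p)⁻¹) ^ j = ((i : ℕ) : ZMod p) ^ e := by
    intro j e hje i h1 h2
    rw [inv_pow]
    exact inv_eq_of_mul_eq_one_right
      (by rw [← pow_add, hje, ZMod.pow_card_sub_one_eq_one (hne i h1 h2)])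
  have hS2 : ∀ k, 1 ≤ k → k ≤ p - 1 →
      ∑ i ∈ Finset.Icc 1 k, ((i : ℕ) : ZMod p)⁻¹
        = ∑ i ∈ Finset.Icc 1 k, ((i : ℕ) : ZMod p) ^ (p - 2) := by
    intro k h1 h2
    apply Finset.sum_congr rfl
    intro i hi
    have hi' := Finset.mem_Icc.mp hi
    have h := hinv 1 (p - 2) (by omega) i hi'.1 (by omega)
    rwa [pow_one] at h
  have hS3 : ∀ k, 1 ≤ k → k ≤ p - 1 →
      ∑ i ∈ Finset.Icc 1 k, (((i : ℕ) : ZMod p)⁻¹) ^ 2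
        = ∑ i ∈ Finset.Icc 1 k, ((i : ℕ) : ZMod p) ^ (p - 3) := by
    intro k h1 h2
    exact Finset.sum_congr rfl fun i hi => by
      have hi' := Finset.mem_Icc.mp hi
      exact hinv 2 (p - 3) (by omega) i hi'.1 (by omega)
  have hF2 : ∀ k : ℕ, ∑ i ∈ Finset.Icc 1 k, ((i : ℕ) : ZMod p) ^ (p - 2)
      = -∑ r ∈ Finset.range (p - 1), cc p r * ((k : ℕ) : ZMod p) ^ (p - 1 - r) := by
    intro k
    have hf := faulhaber p (p - 2) (by omega) k
    rw [show p - 2 + 1 = p - 1 from by omega, hm1] at hf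
    unfold cc
    linear_combination -hf
  have hF3 : ∀ k : ℕ, (-2 : ZMod p) * ∑ i ∈ Finset.Icc 1 k, ((i : ℕ) : ZMod p) ^ (p - 3)
      = ∑ s ∈ Finset.range (p - 2), dd p s * ((k : ℕ) : ZMod p) ^ (p - 2 - s) := by
    intro k
    have hf := faulhaber p (p - 3) (by omega) k
    rw [show p - 3 + 1 = p - 2 from by omega, hm2] at hf
    unfold dd
    exact hf
  have hdvd1 : ∀ e : ℕ, 0 < e → e < p - 1 → ¬ (p - 1) ∣ e := by
    intro e he1 he2 hd
    exact absurd (Nat.le_of_dvd he1 hd) (by omega)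
  have hSig1 : ∑ i ∈ Finset.Icc 1 (p - 1), ((i : ℕ) : ZMod p)⁻¹ = 0 := by
    rw [hS2 (p - 1) (by omega) le_rfl, sum_pow_Icc p (p - 2) (by omega),
      if_neg (hdvd1 (p - 2) (by omega) (by omega))]
  have hSig2 : ∑ i ∈ Finset.Icc 1 (p - 1), (((i : ℕ) : ZMod p)⁻¹) ^ 2 = 0 := by
    rw [hS3 (p - 1) (by omega) le_rfl, sum_pow_Icc p (p - 3) (by omega),
      if_neg (hdvd1 (p - 3) (by omega) (by omega))]
  have hSig4 : ∑ i ∈ Finset.Icc 1 (p - 1), (((i : ℕ) : ZMod p)⁻¹) ^ 4 = 0 := by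
    have h : ∑ i ∈ Finset.Icc 1 (p - 1), (((i : ℕ) : ZMod p)⁻¹) ^ 4
        = ∑ i ∈ Finset.Icc 1 (p - 1), ((i : ℕ) : ZMod p) ^ (p - 5) := by
      apply Finset.sum_congr rfl
      intro i hi
      have hi' := Finset.mem_Icc.mp hi
      exact hinv 4 (p - 5) (by omega) i hi'.1 hi'.2
    rw [h, sum_pow_Icc p (p - 5) (by omega), if_neg (hdvd1 (p - 5) (by omega) (by omega))]
  -- G1: sum H_k/k = 0, hence cc p (p-2) = 0
  have hG1 : ∑ k ∈ Finset.Icc 1 (p - 1),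
      (∑ i ∈ Finset.Icc 1 k, ((i : ℕ) : ZMod p)⁻¹) * ((k : ℕ) : ZMod p)⁻¹ = 0 := by
    have hI := identity_I1 (fun i => ((i : ℕ) : ZMod p)⁻¹) (p - 1)
    rw [hSig1, hSig2] at hI
    have h2 : (2 : ZMod p) ≠ 0 := by
      have h := cast_ne_zero_of_lt (p := p) (k := 2) (by omega) (by omega)
      push_cast at h
      exact h
    rcases mul_eq_zero.mp (show (2 : ZMod p) * (∑ k ∈ Finset.Icc 1 (p - 1),
        (∑ i ∈ Finset.Icc 1 k, ((i : ℕ) : ZMod p)⁻¹) * ((k : ℕ) : ZMod p)⁻¹) = 0 from by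
      linear_combination hI) with h | h
    · exact absurd h h2
    · exact h
  have hccP2 : cc p (p - 2) = 0 := by
    have hconv : ∀ k ∈ Finset.Icc 1 (p - 1),
        (∑ i ∈ Finset.Icc 1 k, ((i : ℕ) : ZMod p)⁻¹) * ((k : ℕ) : ZMod p)⁻¹
        = -((∑ r ∈ Finset.range (p - 1), cc p r * ((k : ℕ) : ZMod p) ^ (p - 1 - r))
            * ((k : ℕ) : ZMod p) ^ (p - 2)) := by
      intro k hk
      have hk' := Finset.mem_Icc.mp hk
      have hak : ((k : ℕ) : ZMod p)⁻¹ = ((k : ℕ) : ZMod p) ^ (p - 2) := by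
        have h := hinv 1 (p - 2) (by omega) k hk'.1 hk'.2
        rwa [pow_one] at h
      rw [hS2 k hk'.1 hk'.2, hF2 k, hak]
      ring
    rw [Finset.sum_congr rfl hconv] at hG1
    rw [Finset.sum_neg_distrib] at hG1
    rw [extract_single (fun r => cc p r) (fun r => p - 1 - r) (p - 1) (p - 2)
      (fun r hr => by have := Finset.mem_range.mp hr; omega)] at hG1
    rw [collapse_gen (fun r => cc p r) _ (p - 1) (p - 2)
      (Finset.mem_range.mpr (by omega))
      (by
        intro r hr
        have hr' := Finset.mem_range.mp hr
        constructor
        · intro hd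
          rcases dvd_window (by omega) (by omega) hd with h | h <;> omega
        · rintro rfl
          exact ⟨1, by omega⟩)] at hG1
    linear_combination hG1
  -- G2: sum H2_k/k^2 = 0, hence bmod p (p-4) = 0
  have hG2 : ∑ k ∈ Finset.Icc 1 (p - 1),
      (∑ i ∈ Finset.Icc 1 k, (((i : ℕ) : ZMod p)⁻¹) ^ 2) * (((k : ℕ) : ZMod p)⁻¹) ^ 2 = 0 := by
    have hI := identity_I1 (fun i => (((i : ℕ) : ZMod p)⁻¹) ^ 2) (p - 1)
    have hpow : ∑ i ∈ Finset.Icc 1 (p - 1), ((((i : ℕ) : ZMod p)⁻¹) ^ 2) ^ 2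
        = ∑ i ∈ Finset.Icc 1 (p - 1), (((i : ℕ) : ZMod p)⁻¹) ^ 4 := by
      apply Finset.sum_congr rfl
      intro i _
      ring
    rw [hpow, hSig2, hSig4] at hI
    have h2 : (2 : ZMod p) ≠ 0 := by
      have h := cast_ne_zero_of_lt (p := p) (k := 2) (by omega) (by omega)
      push_cast at h
      exact h
    rcases mul_eq_zero.mp (show (2 : ZMod p) * (∑ k ∈ Finset.Icc 1 (p - 1),
        (∑ i ∈ Finset.Icc 1 k, (((i : ℕ) : ZMod p)⁻¹) ^ 2) * (((k : ℕ) : ZMod p)⁻¹) ^ 2) = 0 from by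
      linear_combination hI) with h | h
    · exact absurd h h2
    · exact h
  have hbP4 : bmod p (p - 4) = 0 := by
    have hconv : ∀ k ∈ Finset.Icc 1 (p - 1),
        (-2 : ZMod p) * ((∑ i ∈ Finset.Icc 1 k, (((i : ℕ) : ZMod p)⁻¹) ^ 2)
          * (((k : ℕ) : ZMod p)⁻¹) ^ 2)
        = (∑ s ∈ Finset.range (p - 2), dd p s * ((k : ℕ) : ZMod p) ^ (p - 2 - s))
            * ((k : ℕ) : ZMod p) ^ (p - 3) := by
      intro k hk
      have hk' := Finset.mem_Icc.mp hk
      rw [hS3 k hk'.1 hk'.2, hinv 2 (p - 3) (by omega) k hk'.1 hk'.2, ← hF3 k]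
      ring
    have hval : (-2 : ZMod p) * ∑ k ∈ Finset.Icc 1 (p - 1),
        (∑ i ∈ Finset.Icc 1 k, (((i : ℕ) : ZMod p)⁻¹) ^ 2) * (((k : ℕ) : ZMod p)⁻¹) ^ 2
        = -dd p (p - 4) := by
      rw [Finset.mul_sum, Finset.sum_congr rfl hconv]
      rw [extract_single (fun s => dd p s) (fun s => p - 2 - s) (p - 2) (p - 3)
        (fun s hs => by have := Finset.mem_range.mp hs; omega)]
      rw [collapse_gen (fun s => dd p s) _ (p - 2) (p - 4)
        (Finset.mem_range.mpr (by omega))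
        (by
          intro s hs
          have hs' := Finset.mem_range.mp hs
          constructor
          · intro hd
            rcases dvd_window (by omega) (by omega) hd with h | h <;> omega
          · rintro rfl
            exact ⟨1, by omega⟩)]
    rw [hG2, mul_zero] at hval
    have hdd : dd p (p - 4) = 0 := by linear_combination hval
    unfold dd at hdd
    rw [choose_p2 p (p - 4) (by omega)] at hdd
    have hne1 : ((-1 : ZMod p)) ^ (p - 4) ≠ 0 := pow_ne_zero _ (neg_ne_zero.mpr one_ne_zero)
    have hne2 : ((p - 4 + 1 : ℕ) : ZMod p) ≠ 0 := by
      have : p - 4 + 1 = p - 3 := by omega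
      rw [this]
      exact cast_ne_zero_of_lt (by omega) (by omega)
    rcases mul_eq_zero.mp hdd with h | h
    · rcases mul_eq_zero.mp h with h' | h'
      · exact absurd h' hne1
      · exact absurd h' hne2
    · exact h
  -- Xone : sum H_k/k^3 = 0
  have hXone : ∑ k ∈ Finset.Icc 1 (p - 1),
      (∑ i ∈ Finset.Icc 1 k, ((i : ℕ) : ZMod p)⁻¹) * (((k : ℕ) : ZMod p)⁻¹) ^ 3 = 0 := by
    have hconv : ∀ k ∈ Finset.Icc 1 (p - 1),
        (∑ i ∈ Finset.Icc 1 k, ((i : ℕ) : ZMod p)⁻¹) * (((k : ℕ) : ZMod p)⁻¹) ^ 3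
        = -((∑ r ∈ Finset.range (p - 1), cc p r * ((k : ℕ) : ZMod p) ^ (p - 1 - r))
            * ((k : ℕ) : ZMod p) ^ (p - 4)) := by
      intro k hk
      have hk' := Finset.mem_Icc.mp hk
      rw [hS2 k hk'.1 hk'.2, hF2 k, hinv 3 (p - 4) (by omega) k hk'.1 hk'.2]
      ring
    rw [Finset.sum_congr rfl hconv, Finset.sum_neg_distrib]
    rw [extract_single (fun r => cc p r) (fun r => p - 1 - r) (p - 1) (p - 4)
      (fun r hr => by have := Finset.mem_range.mp hr; omega)]
    rw [collapse_gen (fun r => cc p r) _ (p - 1) (p - 4)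
      (Finset.mem_range.mpr (by omega))
      (by
        intro r hr
        have hr' := Finset.mem_range.mp hr
        constructor
        · intro hd
          rcases dvd_window (by omega) (by omega) hd with h | h <;> omega
        · rintro rfl
          exact ⟨1, by omega⟩)]
    unfold cc
    rw [hbP4, mul_zero, neg_neg]
  -- odd prime
  obtain ⟨po, hpo⟩ := hp.out.odd_of_ne_two (by omega)
  have hrr : Finset.range (p - 1) = Finset.range ((p - 2) + 1) := by congr 1; omega
  -- T : the target sum
  have hT2 : ∑ k ∈ Finset.Icc 1 (p - 1),
      (∑ i ∈ Finset.Icc 1 k, ((i : ℕ) : ZMod p)⁻¹) ^ 2 * (((k : ℕ) : ZMod p)⁻¹) ^ 2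
      = -(∑ r ∈ Finset.range (p - 2), cc p r * cc p (p - 3 - r))
        - cc p (p - 2) * cc p (p - 2) := by
    have hconv : ∀ k ∈ Finset.Icc 1 (p - 1),
        (∑ i ∈ Finset.Icc 1 k, ((i : ℕ) : ZMod p)⁻¹) ^ 2 * (((k : ℕ) : ZMod p)⁻¹) ^ 2
        = (∑ r ∈ Finset.range (p - 1), cc p r * ((k : ℕ) : ZMod p) ^ (p - 1 - r))
          * (∑ r ∈ Finset.range (p - 1), cc p r * ((k : ℕ) : ZMod p) ^ (p - 1 - r))
          * ((k : ℕ) : ZMod p) ^ (p - 3) := by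
      intro k hk
      have hk' := Finset.mem_Icc.mp hk
      rw [hS2 k hk'.1 hk'.2, hF2 k, hinv 2 (p - 3) (by omega) k hk'.1 hk'.2]
      ring
    rw [Finset.sum_congr rfl hconv]
    rw [extract_double (fun r => cc p r) (fun r => cc p r)
      (fun r => p - 1 - r) (fun r => p - 1 - r) (p - 1) (p - 1) (p - 3)
      (fun r hr s hs => by
        have := Finset.mem_range.mp hr
        have := Finset.mem_range.mp hs
        omega)]
    rw [hrr, Finset.sum_range_succ]
    have hinner : ∀ r ∈ Finset.range (p - 2),
        (∑ s ∈ Finset.range ((p - 2) + 1), cc p r * cc p s *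
          (if (p - 1) ∣ (p - 1 - r + (p - 1 - s + (p - 3))) then (-1 : ZMod p) else 0))
        = -(cc p r * cc p (p - 3 - r)) := by
      intro r hr
      have hr' := Finset.mem_range.mp hr
      exact collapse_gen (fun s => cc p r * cc p s) _ ((p - 2) + 1) (p - 3 - r)
        (Finset.mem_range.mpr (by omega))
        (by
          intro s hs
          have hs' := Finset.mem_range.mp hs
          constructor
          · intro hd
            rcases dvd_window (by omega) (by omega) hd with h | h <;> omega
          · rintro rfl
            exact ⟨2, by omega⟩)
    rw [Finset.sum_congr rfl hinner, Finset.sum_neg_distrib]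
    have hlast : (∑ s ∈ Finset.range ((p - 2) + 1), cc p (p - 2) * cc p s *
        (if (p - 1) ∣ (p - 1 - (p - 2) + (p - 1 - s + (p - 3))) then (-1 : ZMod p) else 0))
        = -(cc p (p - 2) * cc p (p - 2)) := by
      exact collapse_gen (fun s => cc p (p - 2) * cc p s) _ ((p - 2) + 1) (p - 2)
        (Finset.mem_range.mpr (by omega))
        (by
          intro s hs
          have hs' := Finset.mem_range.mp hs
          constructor
          · intro hd
            rcases dvd_window (by omega) (by omega) hd with h | h <;> omega
          · rintro rfl
            exact ⟨1, by omega⟩)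
    rw [hlast]
    ring
  -- B : the mixed sum
  have hBval : (-2 : ZMod p) * ∑ k ∈ Finset.Icc 1 (p - 1),
      (∑ i ∈ Finset.Icc 1 k, ((i : ℕ) : ZMod p)⁻¹)
        * (∑ i ∈ Finset.Icc 1 k, (((i : ℕ) : ZMod p)⁻¹) ^ 2) * ((k : ℕ) : ZMod p)⁻¹
      = ∑ r ∈ Finset.range (p - 2), cc p r * dd p (p - 3 - r) := by
    have hconv : ∀ k ∈ Finset.Icc 1 (p - 1),
        (-2 : ZMod p) * ((∑ i ∈ Finset.Icc 1 k, ((i : ℕ) : ZMod p)⁻¹)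
          * (∑ i ∈ Finset.Icc 1 k, (((i : ℕ) : ZMod p)⁻¹) ^ 2) * ((k : ℕ) : ZMod p)⁻¹)
        = -((∑ r ∈ Finset.range (p - 1), cc p r * ((k : ℕ) : ZMod p) ^ (p - 1 - r))
          * (∑ s ∈ Finset.range (p - 2), dd p s * ((k : ℕ) : ZMod p) ^ (p - 2 - s))
          * ((k : ℕ) : ZMod p) ^ (p - 2)) := by
      intro k hk
      have hk' := Finset.mem_Icc.mp hk
      have hak : ((k : ℕ) : ZMod p)⁻¹ = ((k : ℕ) : ZMod p) ^ (p - 2) := by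
        have h := hinv 1 (p - 2) (by omega) k hk'.1 hk'.2
        rwa [pow_one] at h
      rw [hS2 k hk'.1 hk'.2, hF2 k, hak, ← hF3 k, hS3 k hk'.1 hk'.2]
      ring
    rw [Finset.mul_sum, Finset.sum_congr rfl hconv, Finset.sum_neg_distrib]
    rw [extract_double (fun r => cc p r) (fun s => dd p s)
      (fun r => p - 1 - r) (fun s => p - 2 - s) (p - 1) (p - 2) (p - 2)
      (fun r hr s hs => by
        have := Finset.mem_range.mp hr
        have := Finset.mem_range.mp hs
        omega)]
    rw [hrr, Finset.sum_range_succ]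
    have hinner : ∀ r ∈ Finset.range (p - 2),
        (∑ s ∈ Finset.range (p - 2), cc p r * dd p s *
          (if (p - 1) ∣ (p - 1 - r + (p - 2 - s + (p - 2))) then (-1 : ZMod p) else 0))
        = -(cc p r * dd p (p - 3 - r)) := by
      intro r hr
      have hr' := Finset.mem_range.mp hr
      exact collapse_gen (fun s => cc p r * dd p s) _ (p - 2) (p - 3 - r)
        (Finset.mem_range.mpr (by omega))
        (by
          intro s hs
          have hs' := Finset.mem_range.mp hs
          constructor
          · intro hd
            rcases dvd_window (by omega) (by omega) hd with h | h <;> omega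
          · rintro rfl
            exact ⟨2, by omega⟩)
    rw [Finset.sum_congr rfl hinner, Finset.sum_neg_distrib]
    have hlast : (∑ s ∈ Finset.range (p - 2), cc p (p - 2) * dd p s *
        (if (p - 1) ∣ (p - 1 - (p - 2) + (p - 2 - s + (p - 2))) then (-1 : ZMod p) else 0))
        = 0 := by
      exact collapse_none (fun s => cc p (p - 2) * dd p s) _ (p - 2)
        (by
          intro s hs
          have hs' := Finset.mem_range.mp hs
          intro hd
          rcases dvd_window (by omega) (by omega) hd with h | h <;> omega)
    rw [hlast]
    ring
  -- convert products of cc/dd into products of bmod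
  have hsign : ∀ r, r ≤ p - 3 → ((-1 : ZMod p)) ^ r * ((-1 : ZMod p)) ^ (p - 3 - r) = 1 := by
    intro r hr
    rw [← pow_add, show r + (p - 3 - r) = p - 3 from by omega]
    exact Even.neg_one_pow ⟨po - 1, by omega⟩
  have hTC : ∑ r ∈ Finset.range (p - 2), cc p r * cc p (p - 3 - r)
      = ∑ r ∈ Finset.range (p - 2), bmod p r * bmod p (p - 3 - r) := by
    apply Finset.sum_congr rfl
    intro r hr
    have hr' := Finset.mem_range.mp hr
    unfold cc
    rw [choose_p1 p r (by omega), choose_p1 p (p - 3 - r) (by omega)]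
    linear_combination (bmod p r * bmod p (p - 3 - r)) * hsign r (by omega)
  have hBW : ∑ r ∈ Finset.range (p - 2), cc p r * dd p (p - 3 - r)
      = ∑ r ∈ Finset.range (p - 2),
          ((p - 2 - r : ℕ) : ZMod p) * (bmod p r * bmod p (p - 3 - r)) := by
    apply Finset.sum_congr rfl
    intro r hr
    have hr' := Finset.mem_range.mp hr
    unfold cc dd
    rw [choose_p1 p r (by omega), choose_p2 p (p - 3 - r) (by omega),
      show p - 3 - r + 1 = p - 2 - r from by omega]
    linear_combination (((p - 2 - r : ℕ) : ZMod p) * bmod p r * bmod p (p - 3 - r))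
      * hsign r (by omega)
  -- reflection symmetry
  have hWW : (∑ r ∈ Finset.range (p - 2),
        ((p - 2 - r : ℕ) : ZMod p) * (bmod p r * bmod p (p - 3 - r)))
      + (∑ r ∈ Finset.range (p - 2),
        ((p - 2 - r : ℕ) : ZMod p) * (bmod p r * bmod p (p - 3 - r)))
      = -(∑ r ∈ Finset.range (p - 2), bmod p r * bmod p (p - 3 - r)) := by
    have h1 := Finset.sum_range_reflect
      (fun r => ((p - 2 - r : ℕ) : ZMod p) * (bmod p r * bmod p (p - 3 - r))) (p - 2)
    have h2 : ∑ j ∈ Finset.range (p - 2),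
        ((p - 2 - (p - 2 - 1 - j) : ℕ) : ZMod p)
          * (bmod p (p - 2 - 1 - j) * bmod p (p - 3 - (p - 2 - 1 - j)))
        = ∑ j ∈ Finset.range (p - 2),
          ((j + 1 : ℕ) : ZMod p) * (bmod p j * bmod p (p - 3 - j)) := by
      apply Finset.sum_congr rfl
      intro j hj
      have hj' := Finset.mem_range.mp hj
      rw [show p - 2 - 1 - j = p - 3 - j from by omega,
        show p - 2 - (p - 3 - j) = j + 1 from by omega,
        show p - 3 - (p - 3 - j) = j from by omega]
      ring
    have h3 : (∑ r ∈ Finset.range (p - 2),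
        ((p - 2 - r : ℕ) : ZMod p) * (bmod p r * bmod p (p - 3 - r)))
        = ∑ j ∈ Finset.range (p - 2),
          ((j + 1 : ℕ) : ZMod p) * (bmod p j * bmod p (p - 3 - j)) := h1.symm.trans h2
    nth_rewrite 2 [h3]
    rw [← Finset.sum_add_distrib, ← Finset.sum_neg_distrib]
    apply Finset.sum_congr rfl
    intro r hr
    have hr' := Finset.mem_range.mp hr
    have hcast : ((p - 2 - r : ℕ) : ZMod p) + ((r + 1 : ℕ) : ZMod p) = -1 := by
      rw [← Nat.cast_add, show (p - 2 - r) + (r + 1) = p - 1 from by omega, hm1]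
    linear_combination (bmod p r * bmod p (p - 3 - r)) * hcast
  -- final assembly
  have hI3 := identity_I3 (fun i => ((i : ℕ) : ZMod p)⁻¹) (p - 1)
  rw [hSig1, hSig2, hSig4, hXone] at hI3
  rw [hccP2] at hT2
  rw [hTC] at hT2
  rw [hBW] at hBval
  linear_combination hI3 - hT2 + 2 * hBval + hWW
section Bridge

variable {p : ℕ} [hp : Fact p.Prime]

lemma den_ne_zero_cast {x : ℚ} (h : ¬ p ∣ x.den) : ((x.den : ℕ) : ZMod p) ≠ 0 :=
  fun hc => h ((ZMod.natCast_eq_zero_iff _ _).mp hc)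

lemma good_mul {x y : ℚ} (hx : ¬ p ∣ x.den) (hy : ¬ p ∣ y.den) :
    ¬ p ∣ (x * y).den ∧ ((x * y : ℚ) : ZMod p) = (x : ZMod p) * (y : ZMod p) := by
  constructor
  · intro hd
    rcases (Nat.Prime.dvd_mul hp.out).mp (hd.trans (Rat.mul_den_dvd x y)) with h | h
    exacts [hx h, hy h]
  · exact Rat.cast_mul_of_ne_zero (den_ne_zero_cast hx) (den_ne_zero_cast hy)

lemma good_sum {s : Finset ℕ} {f : ℕ → ℚ} (hf : ∀ i ∈ s, ¬ p ∣ (f i).den) :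
    ¬ p ∣ (∑ i ∈ s, f i).den ∧
      (((∑ i ∈ s, f i : ℚ)) : ZMod p) = ∑ i ∈ s, ((f i : ℚ) : ZMod p) := by
  classical
  induction s using Finset.induction_on with
  | empty =>
    constructor
    · rw [Finset.sum_empty, Rat.den_zero]
      intro h
      exact absurd (Nat.dvd_one.mp h) (by have := hp.out.one_lt; omega)
    · rw [Finset.sum_empty, Finset.sum_empty, Rat.cast_zero]
  | @insert a s ha ih =>
    have hfa := hf a (Finset.mem_insert_self a s)
    have ihs := ih (fun i hi => hf i (Finset.mem_insert_of_mem hi))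
    rw [Finset.sum_insert ha, Finset.sum_insert ha]
    have hden : ¬ p ∣ (f a + ∑ i ∈ s, f i).den := by
      intro hd
      rcases (Nat.Prime.dvd_mul hp.out).mp
        (hd.trans (Rat.add_den_dvd (f a) (∑ i ∈ s, f i))) with h | h
      exacts [hfa h, ihs.1 h]
    exact ⟨hden, by
      rw [Rat.cast_add_of_ne_zero (den_ne_zero_cast hfa) (den_ne_zero_cast ihs.1), ihs.2]⟩

end Bridge

def harmonicNum (n : ℕ) : ℚ := ∑ k ∈ Finset.Icc 1 n, (1 / (k : ℚ))

/-- `x ≡ 0 (mod p^m)` for a rational `x`: `x` is `p`-integral and `p^m` divides its numerator. -/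
def CongrZeroMod (p m : ℕ) (x : ℚ) : Prop := (p : ℤ) ^ m ∣ x.num ∧ ¬ (p ∣ x.den)

theorem sum_harmonic_sq_div_sq_mod_p (p : ℕ) (hp : p.Prime) (hp7 : 7 ≤ p) :
    CongrZeroMod p 1
      (∑ k ∈ Finset.Icc 1 (p - 1), (harmonicNum k) ^ 2 / (k : ℚ) ^ 2) := by
  haveI hfp : Fact p.Prime := ⟨hp⟩
  have hfrac : ∀ i : ℕ, 1 ≤ i → i ≤ p - 1 →
      ¬ p ∣ (1 / (i : ℚ)).den ∧ ((1 / (i : ℚ) : ℚ) : ZMod p) = ((i : ℕ) : ZMod p)⁻¹ := by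
    intro i h1 h2
    have hdvd : ((1 : ℚ) / (i : ℚ)).den ∣ i := by
      have h := Rat.den_dvd (1 : ℤ) (i : ℤ)
      rw [Rat.divInt_eq_div] at h
      have h' : (((1 : ℤ) : ℚ) / ((i : ℤ) : ℚ)) = 1 / (i : ℚ) := by push_cast; ring
      rw [h'] at h
      exact_mod_cast h
    have hgood : ¬ p ∣ (1 / (i : ℚ)).den := by
      intro hd
      exact absurd (Nat.le_of_dvd (by omega) (hd.trans hdvd)) (by omega)
    refine ⟨hgood, ?_⟩
    have hnum : (((i : ℚ)).num : ZMod p) ≠ 0 := by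
      rw [Rat.num_natCast]
      push_cast
      exact cast_ne_zero_of_lt (p := p) (by omega) (by omega)
    rw [one_div, Rat.cast_inv_of_ne_zero hnum, Rat.cast_natCast]
  have hH : ∀ k, 1 ≤ k → k ≤ p - 1 →
      ¬ p ∣ (harmonicNum k).den ∧
        ((harmonicNum k : ℚ) : ZMod p) = ∑ i ∈ Finset.Icc 1 k, ((i : ℕ) : ZMod p)⁻¹ := by
    intro k h1 h2
    have hg := good_sum (s := Finset.Icc 1 k) (f := fun i => 1 / (i : ℚ))
      (fun i hi => (hfrac i (Finset.mem_Icc.mp hi).1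
        (by have := (Finset.mem_Icc.mp hi).2; omega)).1)
    rw [harmonicNum]
    refine ⟨hg.1, ?_⟩
    rw [hg.2]
    exact Finset.sum_congr rfl fun i hi => (hfrac i (Finset.mem_Icc.mp hi).1
      (by have := (Finset.mem_Icc.mp hi).2; omega)).2
  have hterm : ∀ k ∈ Finset.Icc 1 (p - 1),
      ¬ p ∣ ((harmonicNum k) ^ 2 / (k : ℚ) ^ 2).den ∧
        (((harmonicNum k) ^ 2 / (k : ℚ) ^ 2 : ℚ) : ZMod p)
          = (∑ i ∈ Finset.Icc 1 k, ((i : ℕ) : ZMod p)⁻¹) ^ 2 * (((k : ℕ) : ZMod p)⁻¹) ^ 2 := by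
    intro k hk
    have hk' := Finset.mem_Icc.mp hk
    have hH' := hH k hk'.1 hk'.2
    have hf' := hfrac k hk'.1 hk'.2
    have hkq : (k : ℚ) ≠ 0 := Nat.cast_ne_zero.mpr (by omega)
    have hexp : (harmonicNum k) ^ 2 / (k : ℚ) ^ 2
        = harmonicNum k * harmonicNum k * (1 / (k : ℚ)) * (1 / (k : ℚ)) := by
      field_simp
    rw [hexp]
    have m1 := good_mul hH'.1 hH'.1
    have m2 := good_mul m1.1 hf'.1
    have m3 := good_mul m2.1 hf'.1
    refine ⟨m3.1, ?_⟩
    rw [m3.2, m2.2, m1.2, hH'.2, hf'.2]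
    ring
  have htot := good_sum (s := Finset.Icc 1 (p - 1))
      (f := fun k => (harmonicNum k) ^ 2 / (k : ℚ) ^ 2) (fun k hk => (hterm k hk).1)
  constructor
  · rw [pow_one]
    have hcast0 : ((∑ k ∈ Finset.Icc 1 (p - 1),
        (harmonicNum k) ^ 2 / (k : ℚ) ^ 2 : ℚ) : ZMod p) = 0 := by
      rw [htot.2, Finset.sum_congr rfl (fun k hk => (hterm k hk).2)]
      exact mainT p hp7
    rw [Rat.cast_def, div_eq_zero_iff] at hcast0
    rcases hcast0 with h | h
    · exact (ZMod.intCast_zmod_eq_zero_iff_dvd _ _).mp h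
    · exact absurd h (den_ne_zero_cast htot.1)
  · exact htot.1
end

section
/- (Wolstenholme) For any prime p ≥ 5, the harmonic number H_{p-1} = ∑_{k=1}^{p-1} 1/k is congruent to 0 modulo p^2, i.e., the rational number H_{p-1} has p-adic valuation at least 2. -/
open Finset

/-- The product of all of `1, …, p-1` except `k`. -/
def wolstF (p k : ℕ) : ℕ := ∏ j ∈ (Finset.Icc 1 (p - 1)).erase k, j

/-- The product of all of `1, …, p-1` except `k` and `p - k`. -/
def wolstG (p k : ℕ) : ℕ := ∏ j ∈ ((Finset.Icc 1 (p - 1)).erase k).erase (p - k), j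

section aux

variable {p : ℕ} (hp : p.Prime) (hp5 : 5 ≤ p)
include hp hp5

lemma wolst_mem {k : ℕ} (hk : k ∈ Finset.Icc 1 (p - 1)) :
    p - k ∈ Finset.Icc 1 (p - 1) := by
  simp only [Finset.mem_Icc] at *; omega

lemma wolst_ne {k : ℕ} (hk : k ∈ Finset.Icc 1 (p - 1)) : p - k ≠ k := by
  simp only [Finset.mem_Icc] at hk
  intro h
  have h2 : p = 2 * k := by omega
  have := hp.eq_one_or_self_of_dvd 2 ⟨k, h2⟩
  omega

lemma wolst_kf {k : ℕ} (hk : k ∈ Finset.Icc 1 (p - 1)) :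
    k * wolstF p k = ∏ j ∈ Finset.Icc 1 (p - 1), j :=
  Finset.mul_prod_erase _ (fun j => j) hk

lemma wolst_f_eq {k : ℕ} (hk : k ∈ Finset.Icc 1 (p - 1)) :
    wolstF p k = (p - k) * wolstG p k := by
  have h1 : p - k ∈ (Finset.Icc 1 (p - 1)).erase k :=
    Finset.mem_erase.mpr ⟨wolst_ne hp hp5 hk, wolst_mem hp hp5 hk⟩
  exact (Finset.mul_prod_erase _ (fun j => j) h1).symm

lemma wolst_f_eq' {k : ℕ} (hk : k ∈ Finset.Icc 1 (p - 1)) :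
    wolstF p (p - k) = k * wolstG p k := by
  have h1 : k ∈ (Finset.Icc 1 (p - 1)).erase (p - k) :=
    Finset.mem_erase.mpr ⟨(wolst_ne hp hp5 hk).symm, hk⟩
  have := (Finset.mul_prod_erase _ (fun j => j) h1).symm
  rw [wolstF, this, wolstG, Finset.erase_right_comm]

lemma wolst_pair {k : ℕ} (hk : k ∈ Finset.Icc 1 (p - 1)) :
    wolstF p k + wolstF p (p - k) = p * wolstG p k := by
  rw [wolst_f_eq hp hp5 hk, wolst_f_eq' hp hp5 hk, ← Nat.add_mul]
  have : k ≤ p := by simp only [Finset.mem_Icc] at hk; omega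
  congr 1
  omega

end aux

theorem wolstenholme (p : ℕ) (hp : p.Prime) (hp5 : 5 ≤ p) :
    CongrZeroMod p 2 (harmonicNum (p - 1)) := by
  haveI : Fact p.Prime := ⟨hp⟩
  set s : Finset ℕ := Finset.Icc 1 (p - 1) with hs
  set P : ℕ := ∏ j ∈ s, j with hP
  set T : ℕ := ∑ k ∈ s, wolstF p k with hT
  set G : ℕ := ∑ k ∈ s, wolstG p k with hG
  -- P is (p-1)!
  have hPfac : P = Nat.factorial (p - 1) := by
    rw [hP, hs, ← Finset.Ico_add_one_right_eq_Icc]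
    exact Finset.prod_Ico_id_eq_factorial (p - 1)
  have hpP : ¬ p ∣ P := by
    rw [hPfac, Nat.Prime.dvd_factorial hp]
    omega
  have hP0 : P ≠ 0 := by
    rw [hPfac]; exact (Nat.factorial_pos _).ne'
  -- reflection
  have hsub : ∀ k ∈ s, p - (p - k) = k := by
    intro k hk; simp only [hs, Finset.mem_Icc] at hk; omega
  have hrefl : ∑ k ∈ s, wolstF p (p - k) = T := by
    rw [hT]
    exact Finset.sum_nbij' (fun k => p - k) (fun k => p - k)
      (fun k hk => wolst_mem hp hp5 hk) (fun k hk => wolst_mem hp hp5 hk)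
      hsub hsub (fun k hk => rfl)
  have hTG : 2 * T = p * G := by
    have : ∑ k ∈ s, (wolstF p k + wolstF p (p - k)) = ∑ k ∈ s, p * wolstG p k :=
      Finset.sum_congr rfl fun k hk => wolst_pair hp hp5 hk
    rw [Finset.sum_add_distrib, hrefl, ← Finset.mul_sum] at this
    rw [hG]; omega
  -- p ∣ G, via ZMod p
  have hkne0 : ∀ k ∈ s, (k : ZMod p) ≠ 0 := by
    intro k hk h
    rw [ZMod.natCast_eq_zero_iff] at h
    have := Nat.le_of_dvd (by simp only [hs, Finset.mem_Icc] at hk; omega) h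
    simp only [hs, Finset.mem_Icc] at hk
    omega
  have hgz : ∀ k ∈ s, (wolstG p k : ZMod p) = -(P : ZMod p) * ((k : ZMod p)⁻¹) ^ 2 := by
    intro k hk
    have hkle : k ≤ p := by simp only [hs, Finset.mem_Icc] at hk; omega
    have hnat : k * ((p - k) * wolstG p k) = P := by
      rw [← wolst_f_eq hp hp5 hk, hP, wolst_kf hp hp5 hk]
    have hcast : (k : ZMod p) * (((p : ℕ) - k : ℕ) * (wolstG p k : ZMod p)) = (P : ZMod p) := by
      exact_mod_cast congrArg (Nat.cast : ℕ → ZMod p) hnat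
    rw [Nat.cast_sub hkle, ZMod.natCast_self, zero_sub] at hcast
    have hk0 := hkne0 k hk
    have h2 : ((k : ZMod p))⁻¹ * (k : ZMod p) = 1 := inv_mul_cancel₀ hk0
    linear_combination (-((k : ZMod p)⁻¹) ^ 2) * hcast
      + (-(wolstG p k : ZMod p) * ((k : ZMod p)⁻¹ * (k : ZMod p) + 1)) * h2
  have hGcast : (G : ZMod p) = -(P : ZMod p) * ∑ k ∈ s, ((k : ZMod p)⁻¹) ^ 2 := by
    rw [hG, Nat.cast_sum, Finset.mul_sum]
    exact Finset.sum_congr rfl hgz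
  have hNZ : NeZero p := ⟨hp.pos.ne'⟩
  have hsum1 : ∑ k ∈ s, ((k : ZMod p)⁻¹) ^ 2
      = ∑ x ∈ (Finset.univ : Finset (ZMod p)).erase 0, (x⁻¹) ^ 2 := by
    refine Finset.sum_nbij' (fun k => (k : ZMod p)) (fun x => x.val) ?_ ?_ ?_ ?_ ?_
    · intro k hk
      exact Finset.mem_erase.mpr ⟨hkne0 k hk, Finset.mem_univ _⟩
    · intro x hx
      have hx0 : x ≠ 0 := (Finset.mem_erase.mp hx).1
      have h1 : x.val ≠ 0 := fun h => hx0 (by rwa [← ZMod.val_eq_zero])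
      have h2 : x.val < p := ZMod.val_lt x
      simp only [hs, Finset.mem_Icc]; omega
    · intro k hk
      apply ZMod.val_natCast_of_lt
      simp only [hs, Finset.mem_Icc] at hk; omega
    · intro x hx
      exact ZMod.natCast_zmod_val x
    · intro k hk; rfl
  have hsum2 : ∑ x ∈ (Finset.univ : Finset (ZMod p)).erase 0, (x⁻¹) ^ 2
      = ∑ x ∈ (Finset.univ : Finset (ZMod p)).erase 0, x ^ 2 := by
    refine Finset.sum_nbij' (fun x => x⁻¹) (fun x => x⁻¹) ?_ ?_ ?_ ?_ ?_
    · intro x hx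
      exact Finset.mem_erase.mpr ⟨inv_ne_zero (Finset.mem_erase.mp hx).1, Finset.mem_univ _⟩
    · intro x hx
      exact Finset.mem_erase.mpr ⟨inv_ne_zero (Finset.mem_erase.mp hx).1, Finset.mem_univ _⟩
    · intro x _; exact inv_inv x
    · intro x _; exact inv_inv x
    · intro x _; rfl
  have hsum3 : ∑ x ∈ (Finset.univ : Finset (ZMod p)).erase 0, x ^ 2 = 0 := by
    have h0 : ∑ x ∈ (Finset.univ : Finset (ZMod p)).erase 0, x ^ 2 = ∑ x : ZMod p, x ^ 2 :=
      Finset.sum_erase _ (by norm_num)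
    rw [h0]
    have h2 : 2 < Fintype.card (ZMod p) - 1 := by rw [ZMod.card]; omega
    exact FiniteField.sum_pow_lt_card_sub_one (ZMod p) 2 h2
  have hpG : p ∣ G := by
    rw [← ZMod.natCast_eq_zero_iff, hGcast, hsum1, hsum2, hsum3, mul_zero]
  -- p^2 ∣ T
  have hp2T : p ^ 2 ∣ T := by
    obtain ⟨G', hG'⟩ := hpG
    have h1 : p ^ 2 ∣ 2 * T := by
      rw [hTG, hG']; ring_nf; exact Dvd.intro G' (by ring)
    have hcop : Nat.Coprime (p ^ 2) 2 :=
      Nat.Coprime.pow_left _ ((Nat.coprime_primes hp Nat.prime_two).mpr (by omega))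
    exact hcop.dvd_of_dvd_mul_left h1
  -- harmonicNum (p-1) = T / P
  have hHeq : harmonicNum (p - 1) = (T : ℚ) / (P : ℚ) := by
    rw [harmonicNum, hT, Nat.cast_sum, Finset.sum_div]
    refine Finset.sum_congr rfl fun k hk => ?_
    have hkP : (k : ℚ) * (wolstF p k : ℚ) = (P : ℚ) := by
      exact_mod_cast congrArg (Nat.cast : ℕ → ℚ) (by rw [hP]; exact wolst_kf hp hp5 hk)
    have hk0 : (k : ℚ) ≠ 0 := by
      have : 1 ≤ k := by simp only [hs, Finset.mem_Icc] at hk; omega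
      positivity
    have hPQ : (P : ℚ) ≠ 0 := Nat.cast_ne_zero.mpr hP0
    rw [div_eq_div_iff hk0 hPQ, one_mul, ← hkP]
    ring
  set H : ℚ := harmonicNum (p - 1) with hH
  -- denominator
  have hdenP : (H.den : ℤ) ∣ (P : ℤ) := by
    have : H = Rat.divInt (T : ℤ) (P : ℤ) := by
      rw [Rat.divInt_eq_div, hHeq]; push_cast; ring
    rw [this]
    exact Rat.den_dvd _ _
  have hden : ¬ p ∣ H.den := by
    intro h
    exact hpP (h.trans (Int.natCast_dvd_natCast.mp hdenP))
  -- numerator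
  have hkey : H.num * (P : ℤ) = (T : ℤ) * (H.den : ℤ) := by
    have h1 : (H.num : ℚ) / (H.den : ℚ) = (T : ℚ) / (P : ℚ) := by
      rw [Rat.num_div_den, hHeq]
    have hPQ : (P : ℚ) ≠ 0 := Nat.cast_ne_zero.mpr hP0
    have hdQ : (H.den : ℚ) ≠ 0 := Nat.cast_ne_zero.mpr (Rat.den_ne_zero H)
    field_simp at h1
    rw [mul_comm (T : ℤ)]
    exact_mod_cast h1
  constructor
  · have hdvd : ((p : ℤ)) ^ 2 ∣ (T : ℤ) := by
      have := Int.natCast_dvd_natCast.mpr hp2T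
      push_cast at this
      exact this
    have h2 : (p : ℤ) ^ 2 ∣ H.num * (P : ℤ) := hkey ▸ hdvd.mul_right _
    have hcop : IsCoprime ((p : ℤ) ^ 2) ((P : ℕ) : ℤ) := by
      apply IsCoprime.pow_left
      rw [Nat.isCoprime_iff_coprime]
      exact (Nat.Prime.coprime_iff_not_dvd hp).mpr hpP
    exact hcop.dvd_of_dvd_mul_right h2
  · exact hden
end

section
/- For any prime p ≥ 7, H(1,2,1) + H(3,1) ≡ -∑_{j=1}^{p-1} H_j^2/j^2 modulo p^2, as p-integral rational numbers, where H(1,2,1) = ∑_{1 ≤ i < j < k ≤ p-1} 1/(i j^2 k) and H(3,1) = ∑_{1 ≤ i < j ≤ p-1} 1/(i^3 j). -/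
open Finset

-- basic p-integrality lemmas
lemma pden_add {p : ℕ} (hp : p.Prime) {a b : ℚ} (ha : ¬ p ∣ a.den) (hb : ¬ p ∣ b.den) :
    ¬ p ∣ (a + b).den := fun h =>
  ((hp.dvd_mul.1 (h.trans (Rat.add_den_dvd a b))).elim ha hb)

lemma pden_mul {p : ℕ} (hp : p.Prime) {a b : ℚ} (ha : ¬ p ∣ a.den) (hb : ¬ p ∣ b.den) :
    ¬ p ∣ (a * b).den := fun h =>
  ((hp.dvd_mul.1 (h.trans (Rat.mul_den_dvd a b))).elim ha hb)

lemma pden_sum {p : ℕ} (hp : p.Prime) {ι : Type*} (s : Finset ι) (f : ι → ℚ)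
    (h : ∀ i ∈ s, ¬ p ∣ (f i).den) : ¬ p ∣ (∑ i ∈ s, f i).den := by
  classical
  induction s using Finset.induction_on with
  | empty => simp [Nat.dvd_one]; exact hp.ne_one
  | @insert a s' hx ih =>
    rw [Finset.sum_insert hx]
    exact pden_add hp (h a (Finset.mem_insert_self a s'))
      (ih fun i hi => h i (Finset.mem_insert_of_mem hi))

lemma pden_one_div_nat {p : ℕ} (hp : p.Prime) {m : ℕ} (hm : ¬ p ∣ m) :
    ¬ p ∣ ((1 / (m : ℚ)).den) := by
  intro h
  have h1 : (1 / (m : ℚ)) = Rat.divInt (1 : ℤ) (m : ℤ) := by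
    rw [Rat.divInt_eq_div]; norm_num
  have h2 : ((Rat.divInt (1:ℤ) (m : ℤ)).den : ℤ) ∣ (m : ℤ) := Rat.den_dvd 1 m
  rw [h1] at h
  exact hm (Int.ofNat_dvd.mp ((Int.natCast_dvd_natCast.2 h).trans h2))

-- denominator nonzero in ZMod p
lemma den_ne_zero_zmod {p : ℕ} [hpF : Fact p.Prime] {a : ℚ} (ha : ¬ p ∣ a.den) :
    ((a.den : ZMod p)) ≠ 0 := by
  rw [Ne, ZMod.natCast_eq_zero_iff]; exact ha

-- cast of a finset sum of p-integral rationals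
lemma cast_sum_zmod {p : ℕ} [hpF : Fact p.Prime] {ι : Type*} (s : Finset ι) (f : ι → ℚ)
    (h : ∀ i ∈ s, ¬ p ∣ (f i).den) :
    (((∑ i ∈ s, f i : ℚ)) : ZMod p) = ∑ i ∈ s, ((f i : ℚ) : ZMod p) := by
  classical
  induction s using Finset.induction_on with
  | empty => simp
  | @insert a s' hx ih =>
    rw [Finset.sum_insert hx, Finset.sum_insert hx,
      Rat.cast_add_of_ne_zero (den_ne_zero_zmod (h a (Finset.mem_insert_self a s')))
        (den_ne_zero_zmod (pden_sum hpF.out s' f fun i hi => h i (Finset.mem_insert_of_mem hi))),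
      ih fun i hi => h i (Finset.mem_insert_of_mem hi)]

-- cast = 0 iff p divides numerator (for p-integral rationals)
lemma cast_eq_zero_iff_num {p : ℕ} [hpF : Fact p.Prime] {a : ℚ} (ha : ¬ p ∣ a.den) :
    ((a : ℚ) : ZMod p) = 0 ↔ (p : ℤ) ∣ a.num := by
  rw [Rat.cast_def, div_eq_zero_iff]
  constructor
  · rintro (h | h)
    · exact (ZMod.intCast_zmod_eq_zero_iff_dvd _ _).1 h
    · exact absurd h (den_ne_zero_zmod ha)
  · intro h; exact Or.inl ((ZMod.intCast_zmod_eq_zero_iff_dvd _ _).2 h)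

-- numerator divisibility through multiplication
lemma num_mul_dvd {p : ℕ} (hp : p.Prime) {a b : ℚ} {k l : ℕ}
    (ha : ¬ p ∣ a.den) (hb : ¬ p ∣ b.den)
    (hna : (p:ℤ) ^ k ∣ a.num) (hnb : (p:ℤ) ^ l ∣ b.num) :
    (p:ℤ) ^ (k + l) ∣ (a * b).num := by
  have key : (a * b).num * ((a.den : ℤ) * (b.den : ℤ)) = a.num * b.num * ((a * b).den : ℤ) := by
    have had : ((a.den : ℚ)) ≠ 0 := Nat.cast_ne_zero.2 a.den_nz
    have hbd : ((b.den : ℚ)) ≠ 0 := Nat.cast_ne_zero.2 b.den_nz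
    have habd : (((a*b).den : ℚ)) ≠ 0 := Nat.cast_ne_zero.2 (a*b).den_nz
    have e1 : ((a*b).num : ℚ) = (a * b) * ((a*b).den : ℚ) :=
      (div_eq_iff habd).1 (Rat.num_div_den (a*b))
    have e2 : (a.num : ℚ) = a * (a.den : ℚ) := (div_eq_iff had).1 (Rat.num_div_den a)
    have e3 : (b.num : ℚ) = b * (b.den : ℚ) := (div_eq_iff hbd).1 (Rat.num_div_den b)
    have : ((a*b).num : ℚ) * ((a.den : ℚ) * (b.den : ℚ))
        = (a.num : ℚ) * (b.num : ℚ) * ((a*b).den : ℚ) := by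
      rw [e1, e2, e3]; ring
    exact_mod_cast this
  have hdvd : (p:ℤ) ^ (k + l) ∣ (a * b).num * ((a.den : ℤ) * (b.den : ℤ)) := by
    rw [key, pow_add]
    exact dvd_mul_of_dvd_left (mul_dvd_mul hna hnb) _
  have hcop : IsCoprime ((p:ℤ) ^ (k + l)) ((a.den : ℤ) * (b.den : ℤ)) := by
    apply IsCoprime.pow_left
    apply IsCoprime.mul_right
    · exact (Nat.prime_iff_prime_int.mp hp).coprime_iff_not_dvd.2
        (fun h => ha (Int.ofNat_dvd.mp h))
    · exact (Nat.prime_iff_prime_int.mp hp).coprime_iff_not_dvd.2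
        (fun h => hb (Int.ofNat_dvd.mp h))
  exact hcop.dvd_of_dvd_mul_right hdvd


lemma harm_succ (n : ℕ) : harmonicNum (n + 1) = harmonicNum n + 1 / ((n : ℚ) + 1) := by
  unfold harmonicNum
  rw [Finset.sum_Icc_succ_top (Nat.one_le_iff_ne_zero.2 (Nat.succ_ne_zero n))]
  push_cast
  ring

lemma ico_sum_inv (j : ℕ) : ∑ i ∈ Ico 1 j, (1 : ℚ) / (i : ℚ) = harmonicNum j - 1 / (j : ℚ) := by
  cases j with
  | zero => simp [harmonicNum]
  | succ k =>
    rw [Finset.Ico_add_one_right_eq_Icc, harm_succ]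
    push_cast
    have : harmonicNum k = ∑ i ∈ Icc 1 k, (1:ℚ)/(i:ℚ) := rfl
    rw [this]
    ring

lemma key_identity (n : ℕ) :
    ((∑ k ∈ Finset.Icc 1 n, ∑ j ∈ Finset.Ico 1 k, ∑ i ∈ Finset.Ico 1 j,
          (1 / ((i : ℚ) * (j : ℚ) ^ 2 * (k : ℚ))))
      + (∑ j ∈ Finset.Icc 1 n, ∑ i ∈ Finset.Ico 1 j, (1 / ((i : ℚ) ^ 3 * (j : ℚ)))))
      + (∑ j ∈ Finset.Icc 1 n, (harmonicNum j) ^ 2 / (j : ℚ) ^ 2)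
    = harmonicNum n * (∑ j ∈ Finset.Icc 1 n, harmonicNum j / (j : ℚ) ^ 2) := by
  induction n with
  | zero => simp [harmonicNum]
  | succ n ih =>
    have h1 : (1 : ℕ) ≤ n + 1 := Nat.one_le_iff_ne_zero.2 (Nat.succ_ne_zero n)
    rw [Finset.sum_Icc_succ_top h1, Finset.sum_Icc_succ_top h1, Finset.sum_Icc_succ_top h1,
        Finset.sum_Icc_succ_top h1, harm_succ]
    -- name abbreviations
    set m : ℚ := (n : ℚ) + 1 with hm
    have hmcast : ((n + 1 : ℕ) : ℚ) = m := by push_cast [hm]; ring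
    have hmne : m ≠ 0 := by positivity
    -- Simplify the A-increment: sum over j of (sum over i of 1/i) scaled
    have hTA : ∑ j ∈ Icc 1 n, ∑ i ∈ Ico 1 j, (1 / ((i : ℚ) * (j : ℚ) ^ 2 * ((n+1 : ℕ) : ℚ)))
        = ∑ j ∈ Icc 1 n, (harmonicNum j - 1/(j:ℚ)) / ((j:ℚ)^2 * m) := by
      refine Finset.sum_congr rfl fun j hj => ?_
      have hj1 : 1 ≤ j := (Finset.mem_Icc.1 hj).1
      have hjne : (j : ℚ) ≠ 0 := Nat.cast_ne_zero.2 (by omega)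
      rw [hmcast, ← ico_sum_inv j, Finset.sum_div]
      refine Finset.sum_congr rfl fun i hi => ?_
      have hine : (i : ℚ) ≠ 0 := Nat.cast_ne_zero.2 (by
        have := (Finset.mem_Ico.1 hi).1; omega)
      field_simp
    have hTB : ∑ i ∈ Icc 1 n, (1 / ((i : ℚ) ^ 3 * ((n+1:ℕ) : ℚ)))
        = ∑ j ∈ Icc 1 n, 1 / ((j:ℚ)^3 * m) := by
      rw [hmcast]
    have hsum : (∑ j ∈ Icc 1 n, (harmonicNum j - 1/(j:ℚ)) / ((j:ℚ)^2 * m))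
        + (∑ j ∈ Icc 1 n, 1 / ((j:ℚ)^3 * m))
        = (∑ j ∈ Icc 1 n, harmonicNum j / (j : ℚ) ^ 2) * (1/m) := by
      rw [← Finset.sum_add_distrib, Finset.sum_mul]
      refine Finset.sum_congr rfl fun j hj => ?_
      have hj1 : 1 ≤ j := (Finset.mem_Icc.1 hj).1
      have hjne : (j : ℚ) ≠ 0 := Nat.cast_ne_zero.2 (by omega)
      field_simp
      ring
    simp only [Finset.Ico_add_one_right_eq_Icc]
    rw [hTA, hTB, hmcast]
    linear_combination ih + hsum

lemma wolstenholme_s14 {p : ℕ} (hp : p.Prime) (hp7 : 7 ≤ p) :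
    (p : ℤ) ^ 2 ∣ (harmonicNum (p - 1)).num := by
  haveI : Fact p.Prime := ⟨hp⟩
  set S : ℚ := ∑ j ∈ Icc 1 (p - 1), 1 / ((j * (p - j) : ℕ) : ℚ) with hS
  -- non-divisibility of the term denominators
  have hterm : ∀ j ∈ Icc 1 (p - 1), ¬ p ∣ (j * (p - j)) := by
    intro j hj
    obtain ⟨hj1, hj2⟩ := Finset.mem_Icc.1 hj
    intro hdvd
    rcases hp.dvd_mul.1 hdvd with h | h
    · exact absurd (Nat.le_of_dvd (by omega) h) (by omega)
    · exact absurd (Nat.le_of_dvd (by omega) h) (by omega)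
  have hSden : ¬ p ∣ S.den :=
    pden_sum hp _ _ (fun j hj => pden_one_div_nat hp (hterm j hj))
  -- 2 * H = p * S
  have hre : ∑ j ∈ Icc 1 (p-1), (1:ℚ)/(j:ℚ) = ∑ j ∈ Icc 1 (p-1), (1:ℚ)/(((p - j : ℕ)):ℚ) := by
    refine Finset.sum_nbij' (fun j => p - j) (fun j => p - j) ?_ ?_ ?_ ?_ ?_ <;>
      intro a ha <;> simp only [Finset.mem_Icc] at ha ⊢ <;>
      first
        | omega
        | (congr 2; omega)
  have h2H : 2 * harmonicNum (p - 1) = (p : ℚ) * S := by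
    have hH : harmonicNum (p - 1) = ∑ j ∈ Icc 1 (p-1), (1:ℚ)/(j:ℚ) := rfl
    rw [hS, Finset.mul_sum, hH]
    rw [two_mul]
    nth_rewrite 2 [hre]
    rw [← Finset.sum_add_distrib]
    refine Finset.sum_congr rfl fun j hj => ?_
    obtain ⟨hj1, hj2⟩ := Finset.mem_Icc.1 hj
    have hjp : j ≤ p := by omega
    have hc1 : ((p - j : ℕ) : ℚ) = (p : ℚ) - (j : ℚ) := by
      push_cast [Nat.cast_sub hjp]; ring
    have hc2 : ((j * (p - j) : ℕ) : ℚ) = (j : ℚ) * ((p : ℚ) - (j : ℚ)) := by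
      push_cast [Nat.cast_sub hjp]; ring
    rw [hc1, hc2]
    have hj0 : (j : ℚ) ≠ 0 := Nat.cast_ne_zero.2 (by omega)
    have hpj0 : (p : ℚ) - (j : ℚ) ≠ 0 := by
      have : ((p - j : ℕ) : ℚ) ≠ 0 := Nat.cast_ne_zero.2 (by omega)
      rwa [hc1] at this
    field_simp
    try ring
  -- S ≡ 0 mod p
  have hScast : ((S : ℚ) : ZMod p) = 0 := by
    rw [hS, cast_sum_zmod _ _ (fun j hj => pden_one_div_nat hp (hterm j hj))]
    have hstep : ∀ j ∈ Icc 1 (p-1),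
        ((1 / ((j * (p - j) : ℕ) : ℚ) : ℚ) : ZMod p) = -(((j : ZMod p)) ^ (p - 3)) := by
      intro j hj
      obtain ⟨hj1, hj2⟩ := Finset.mem_Icc.1 hj
      have hjp : j ≤ p := by omega
      have hmne : ((j * (p - j) : ℕ) : ZMod p) ≠ 0 := by
        rw [Ne, ZMod.natCast_eq_zero_iff]; exact hterm j hj
      have hnum : ((((j * (p - j) : ℕ) : ℚ)).num : ZMod p) ≠ 0 := by
        rw [Rat.num_natCast]; push_cast; exact_mod_cast hmne
      rw [one_div, Rat.cast_inv_of_ne_zero hnum, Rat.cast_natCast]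
      have hj0 : (j : ZMod p) ≠ 0 := by
        rw [Ne, ZMod.natCast_eq_zero_iff]
        intro h; exact absurd (Nat.le_of_dvd (by omega) h) (by omega)
      have hcast : ((j * (p - j) : ℕ) : ZMod p) = -((j : ZMod p) ^ 2) := by
        push_cast [Nat.cast_sub hjp]
        rw [ZMod.natCast_self]
        ring
      rw [hcast, inv_neg]
      congr 1
      apply inv_eq_of_mul_eq_one_right
      rw [← pow_add]
      have hexp : 2 + (p - 3) = p - 1 := by omega
      rw [hexp, ZMod.pow_card_sub_one_eq_one hj0]
    rw [Finset.sum_congr rfl hstep, Finset.sum_neg_distrib]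
    rw [neg_eq_zero]
    -- extend sum to range p and identify with sum over ZMod p
    have hins : Finset.range p = insert 0 (Icc 1 (p-1)) := by
      ext x; simp only [Finset.mem_range, Finset.mem_insert, Finset.mem_Icc]; omega
    have hzero : ((0 : ℕ) : ZMod p) ^ (p - 3) = 0 := by
      rw [Nat.cast_zero, zero_pow (by omega : p - 3 ≠ 0)]
    have hrange : ∑ j ∈ Finset.range p, ((j : ZMod p)) ^ (p - 3)
        = ∑ j ∈ Icc 1 (p-1), ((j : ZMod p)) ^ (p - 3) := by
      rw [hins, Finset.sum_insert (by simp), hzero, zero_add]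
    rw [← hrange]
    have huniv : ∑ j ∈ Finset.range p, ((j : ZMod p)) ^ (p - 3)
        = ∑ x : ZMod p, x ^ (p - 3) := by
      refine Finset.sum_nbij' (fun j => (j : ZMod p)) (fun x => x.val) ?_ ?_ ?_ ?_ ?_
      · intro a _; exact Finset.mem_univ _
      · intro a _; exact Finset.mem_range.2 (ZMod.val_lt a)
      · intro a ha; exact ZMod.val_cast_of_lt (Finset.mem_range.1 ha)
      · intro a _; exact ZMod.natCast_rightInverse a
      · intro a _; rfl
    rw [huniv]
    have hcard : Fintype.card (ZMod p) = p := ZMod.card p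
    apply FiniteField.sum_pow_lt_card_sub_one
    omega
  have hSnum : (p : ℤ) ∣ S.num := (cast_eq_zero_iff_num hSden).1 hScast
  -- assemble
  have hpden : ¬ p ∣ ((p : ℚ)).den := by
    rw [Rat.den_natCast, Nat.dvd_one]; exact hp.ne_one
  have hpnum : (p : ℤ) ^ 1 ∣ ((p : ℚ)).num := by rw [Rat.num_natCast, pow_one]
  have h2 : (p : ℤ) ^ (1 + 1) ∣ ((p : ℚ) * S).num :=
    num_mul_dvd hp hpden hSden hpnum (by rw [pow_one]; exact hSnum)
  have hpSden : ¬ p ∣ ((p : ℚ) * S).den := pden_mul hp hpden hSden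
  have hhden : ¬ p ∣ ((1/2 : ℚ)).den := by
    have : ((1/2 : ℚ)).den = 2 := by norm_num
    rw [this]
    intro h
    have := Nat.le_of_dvd (by norm_num) h
    omega
  have hhnum : (p : ℤ) ^ 0 ∣ ((1/2 : ℚ)).num := by simp
  have hfin : (p : ℤ) ^ (0 + (1 + 1)) ∣ ((1/2 : ℚ) * ((p : ℚ) * S)).num :=
    num_mul_dvd hp hhden hpSden hhnum h2
  have heq : (1/2 : ℚ) * ((p : ℚ) * S) = harmonicNum (p - 1) := by
    rw [← h2H]; ring
  rw [heq] at hfin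
  simpa using hfin

lemma den_not_dvd_of_num {p : ℕ} (hp : p.Prime) {x : ℚ} (h : (p : ℤ) ^ 2 ∣ x.num) :
    ¬ p ∣ x.den := by
  intro hd
  by_cases hx : x.num = 0
  · have : x = 0 := Rat.num_eq_zero.mp hx
    rw [this] at hd
    exact hp.ne_one (Nat.dvd_one.mp hd)
  · have hpd : (p : ℤ) ∣ x.num := dvd_trans (dvd_pow_self (p : ℤ) two_ne_zero) h
    have hnum : p ∣ x.num.natAbs := Int.natCast_dvd.mp hpd
    have := Nat.dvd_gcd hnum hd
    rw [x.reduced] at this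
    exact hp.ne_one (Nat.dvd_one.mp this)

lemma pden_harmonic {p : ℕ} (hp : p.Prime) {j : ℕ} (hj : j < p) :
    ¬ p ∣ (harmonicNum j).den := by
  apply pden_sum hp
  intro k hk
  obtain ⟨hk1, hk2⟩ := Finset.mem_Icc.1 hk
  exact pden_one_div_nat hp (fun h => absurd (Nat.le_of_dvd (by omega) h) (by omega))

theorem H121_plus_H31_congr_sum (p : ℕ) (hp : p.Prime) (hp7 : 7 ≤ p) :
    CongrZeroMod p 2
      (((∑ k ∈ Finset.Icc 1 (p - 1), ∑ j ∈ Finset.Ico 1 k, ∑ i ∈ Finset.Ico 1 j,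
            (1 / ((i : ℚ) * (j : ℚ) ^ 2 * (k : ℚ))))
        + (∑ j ∈ Finset.Icc 1 (p - 1), ∑ i ∈ Finset.Ico 1 j, (1 / ((i : ℚ) ^ 3 * (j : ℚ)))))
        + (∑ j ∈ Finset.Icc 1 (p - 1), (harmonicNum j) ^ 2 / (j : ℚ) ^ 2)) := by
  rw [key_identity (p - 1)]
  -- p-integrality of the second factor
  have hGden : ¬ p ∣ (∑ j ∈ Finset.Icc 1 (p - 1), harmonicNum j / (j : ℚ) ^ 2).den := by
    apply pden_sum hp
    intro j hj
    obtain ⟨hj1, hj2⟩ := Finset.mem_Icc.1 hj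
    have hjlt : j < p := by omega
    have hrw : harmonicNum j / (j : ℚ) ^ 2 = harmonicNum j * (1 / ((j ^ 2 : ℕ) : ℚ)) := by
      push_cast
      ring
    rw [hrw]
    apply pden_mul hp (pden_harmonic hp hjlt)
    apply pden_one_div_nat hp
    intro h
    rcases hp.dvd_mul.1 (by rwa [pow_two] at h) with h' | h' <;>
      exact absurd (Nat.le_of_dvd (by omega) h') (by omega)
  have hHden : ¬ p ∣ (harmonicNum (p - 1)).den := pden_harmonic hp (by omega)
  have hGnum : (p : ℤ) ^ 0 ∣ (∑ j ∈ Finset.Icc 1 (p - 1), harmonicNum j / (j : ℚ) ^ 2).num := by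
    simp
  have hmain := num_mul_dvd hp hHden hGden (wolstenholme_s14 hp hp7) hGnum
  rw [Nat.add_zero] at hmain
  exact ⟨hmain, den_not_dvd_of_num hp hmain⟩
end

section
/- For any prime p ≥ 7, 4·∑_{k=1}^{p-1} H_k^3/k - 6·∑_{k=1}^{p-1} H_k^2/k^2 + 4·∑_{k=1}^{p-1} H_{k-1}/k^3 + 3·∑_{k=1}^{p-1} 1/k^4 ≡ 0 modulo p^2, as p-integral rational numbers. -/
open Finset

lemma harmonicNum_succ (n : ℕ) : harmonicNum (n+1) = harmonicNum n + 1/((n:ℚ)+1) := by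
  unfold harmonicNum
  rw [Finset.sum_Icc_succ_top (by omega)]
  push_cast; ring

lemma key_id (x m : ℚ) (hm : m ≠ 0) :
    4*((x+1/m)^3/m) - 6*((x+1/m)^2/m^2) + 4*(x/m^3) + 3*(1/m^4) = (x+1/m)^4 - x^4 := by
  field_simp; ring

lemma tele (n : ℕ) :
    4 * (∑ k ∈ Finset.Icc 1 n, (harmonicNum k) ^ 3 / (k : ℚ))
      - 6 * (∑ k ∈ Finset.Icc 1 n, (harmonicNum k) ^ 2 / (k : ℚ) ^ 2)
      + 4 * (∑ k ∈ Finset.Icc 1 n, harmonicNum (k - 1) / (k : ℚ) ^ 3)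
      + 3 * (∑ k ∈ Finset.Icc 1 n, (1 / (k : ℚ) ^ 4)) = harmonicNum n ^ 4 := by
  induction n with
  | zero => simp [harmonicNum]
  | succ n ih =>
    rw [Finset.sum_Icc_succ_top (by omega), Finset.sum_Icc_succ_top (by omega),
      Finset.sum_Icc_succ_top (by omega), Finset.sum_Icc_succ_top (by omega)]
    have h1 : (n:ℚ) + 1 ≠ 0 := by positivity
    simp only [Nat.add_sub_cancel, harmonicNum_succ]
    push_cast
    linear_combination ih + key_id (harmonicNum n) ((n:ℚ)+1) h1


lemma harmonicNum_den_dvd (n : ℕ) : (harmonicNum n).den ∣ n.factorial := by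
  induction n with
  | zero => simp [harmonicNum]
  | succ n ih =>
    rw [harmonicNum_succ]
    have h2 : ((1:ℚ)/((n:ℚ)+1)).den ∣ (n+1 : ℕ) := by
      have heq : ((1:ℚ)/((n:ℚ)+1)) = Rat.divInt (1:ℤ) ((n:ℤ)+1) := by
        rw [Rat.divInt_eq_div]; push_cast; ring
      rw [heq]
      have := Rat.den_dvd (1:ℤ) ((n:ℤ)+1)
      exact_mod_cast this
    calc (harmonicNum n + 1/((n:ℚ)+1)).den
        ∣ (harmonicNum n).den * ((1:ℚ)/((n:ℚ)+1)).den := Rat.add_den_dvd _ _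
      _ ∣ n.factorial * (n+1) := Nat.mul_dvd_mul ih h2
      _ = (n+1).factorial := by rw [Nat.factorial_succ]; ring

lemma sum_inv_zmod (p : ℕ) (hp : p.Prime) (hp7 : 7 ≤ p) :
    ∑ k ∈ Finset.Icc 1 (p-1), ((k : ZMod p))⁻¹ = 0 := by
  haveI : Fact p.Prime := ⟨hp⟩
  have hcast0 : ∀ k ∈ Finset.Icc 1 (p-1), ((k : ℕ) : ZMod p) ≠ 0 := by
    intro k hk
    simp only [Finset.mem_Icc] at hk
    rw [Ne, ZMod.natCast_eq_zero_iff]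
    intro hdvd
    have := Nat.le_of_dvd (by omega) hdvd
    omega
  have hmem : ∀ a ∈ Finset.Icc 1 (p-1), (((a : ZMod p))⁻¹).val ∈ Finset.Icc 1 (p-1) := by
    intro a ha
    have h0 := hcast0 a ha
    have hinv : ((a : ZMod p))⁻¹ ≠ 0 := inv_ne_zero h0
    simp only [Finset.mem_Icc]
    constructor
    · rcases Nat.eq_zero_or_pos ((((a : ZMod p))⁻¹).val) with h | h
      · exact absurd ((ZMod.val_eq_zero _).mp h) hinv
      · omega
    · have := ZMod.val_lt (((a : ZMod p))⁻¹); omega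
  have hinvol : ∀ a ∈ Finset.Icc 1 (p-1),
      ((((((a : ZMod p))⁻¹).val : ℕ) : ZMod p))⁻¹.val = a := by
    intro a ha
    simp only [Finset.mem_Icc] at ha
    rw [ZMod.natCast_zmod_val, inv_inv, ZMod.val_cast_of_lt (by omega)]
  have step1 : ∑ k ∈ Finset.Icc 1 (p-1), ((k : ZMod p))⁻¹
      = ∑ k ∈ Finset.Icc 1 (p-1), ((k : ℕ) : ZMod p) := by
    refine Finset.sum_nbij' (fun k => (((k : ZMod p))⁻¹).val)
      (fun k => (((k : ZMod p))⁻¹).val) hmem hmem ?_ ?_ ?_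
    · intro a ha; exact hinvol a ha
    · intro a ha; exact hinvol a ha
    · intro a ha
      rw [ZMod.natCast_zmod_val]
  rw [step1]
  have step2 : (∑ k ∈ Finset.Icc 1 (p-1), ((k : ℕ) : ZMod p))
      = ((∑ k ∈ Finset.Icc 1 (p-1), k : ℕ) : ZMod p) := by push_cast; rfl
  rw [step2]
  have hsum : (∑ k ∈ Finset.Icc 1 (p-1), k) * 2 = p * (p-1) := by
    have heq : ∑ k ∈ Finset.Icc 1 (p-1), k = ∑ k ∈ Finset.range p, k := by
      refine Finset.sum_subset ?_ ?_
      · intro x hx; simp only [Finset.mem_Icc] at hx; simp only [Finset.mem_range]; omega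
      · intro x hx hnx
        simp only [Finset.mem_range] at hx
        simp only [Finset.mem_Icc] at hnx
        omega
    rw [heq, Finset.sum_range_id_mul_two]
  have h2' : ((2 : ZMod p)) ≠ 0 := by
    have h2 : ((2 : ℕ) : ZMod p) ≠ 0 := by
      rw [Ne, ZMod.natCast_eq_zero_iff]
      intro h; have := Nat.le_of_dvd (by norm_num) h; omega
    exact_mod_cast h2
  have hz : ((∑ k ∈ Finset.Icc 1 (p-1), k : ℕ) : ZMod p) * 2 = 0 := by
    have hc := congrArg (fun n : ℕ => (n : ZMod p)) hsum
    push_cast at hc ⊢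
    rw [hc]
    simp
  exact (mul_eq_zero.mp hz).resolve_right h2'

lemma harmonic_num_dvd (p : ℕ) (hp : p.Prime) (hp7 : 7 ≤ p) :
    (p : ℤ) ∣ (harmonicNum (p-1)).num := by
  haveI : Fact p.Prime := ⟨hp⟩
  set N : ℕ := ∑ k ∈ Finset.Icc 1 (p-1), (p-1).factorial / k with hN
  have hdvdf : ∀ k ∈ Finset.Icc 1 (p-1), k ∣ (p-1).factorial := by
    intro k hk; simp only [Finset.mem_Icc] at hk
    exact Nat.dvd_factorial (by omega) hk.2
  have hNzero : (N : ZMod p) = 0 := by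
    rw [hN]
    push_cast
    have hterm : ∀ k ∈ Finset.Icc 1 (p-1),
        (((p-1).factorial / k : ℕ) : ZMod p)
          = ((p-1).factorial : ZMod p) * ((k : ZMod p))⁻¹ := by
      intro k hk
      simp only [Finset.mem_Icc] at hk
      have hk0 : ((k : ℕ) : ZMod p) ≠ 0 := by
        rw [Ne, ZMod.natCast_eq_zero_iff]
        intro hdvd; have := Nat.le_of_dvd (by omega) hdvd; omega
      rw [Nat.cast_div (hdvdf k (Finset.mem_Icc.mpr hk)) hk0, div_eq_mul_inv]
    rw [Finset.sum_congr rfl hterm, ← Finset.mul_sum, sum_inv_zmod p hp hp7, mul_zero]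
  have hpN : p ∣ N := (ZMod.natCast_eq_zero_iff _ _).mp hNzero
  have hQ : ((p-1).factorial : ℚ) * harmonicNum (p-1) = (N : ℚ) := by
    rw [hN]
    push_cast
    unfold harmonicNum
    rw [Finset.mul_sum]
    refine Finset.sum_congr rfl ?_
    intro k hk
    simp only [Finset.mem_Icc] at hk
    have hk0 : ((k : ℕ) : ℚ) ≠ 0 := by
      simp only [Ne, Nat.cast_eq_zero]; omega
    rw [Nat.cast_div (hdvdf k (Finset.mem_Icc.mpr hk)) hk0]
    field_simp
  set H := harmonicNum (p-1) with hH
  have hint : ((p-1).factorial : ℤ) * H.num = (N : ℤ) * (H.den : ℤ) := by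
    have hden : ((H.den : ℚ)) ≠ 0 := by
      simp [Rat.den_ne_zero]
    have hq := hQ
    rw [← Rat.num_div_den H] at hq
    field_simp at hq
    rw [mul_comm (N:ℤ)]
    exact_mod_cast hq
  have hpdvd : (p : ℤ) ∣ ((p-1).factorial : ℤ) * H.num := by
    rw [hint]
    exact Dvd.dvd.mul_right (Int.natCast_dvd_natCast.mpr hpN) _
  have hpprime : Prime (p : ℤ) := Nat.prime_iff_prime_int.mp hp
  rcases hpprime.dvd_mul.mp hpdvd with h | h
  · exfalso
    have h1 : p ∣ (p-1).factorial := Int.natCast_dvd_natCast.mp h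
    have := (Nat.Prime.dvd_factorial hp).mp h1
    omega
  · exact h

theorem combined_congr (p : ℕ) (hp : p.Prime) (hp7 : 7 ≤ p) :
    CongrZeroMod p 2
      (4 * (∑ k ∈ Finset.Icc 1 (p - 1), (harmonicNum k) ^ 3 / (k : ℚ))
        - 6 * (∑ k ∈ Finset.Icc 1 (p - 1), (harmonicNum k) ^ 2 / (k : ℚ) ^ 2)
        + 4 * (∑ k ∈ Finset.Icc 1 (p - 1), harmonicNum (k - 1) / (k : ℚ) ^ 3)
        + 3 * (∑ k ∈ Finset.Icc 1 (p - 1), (1 / (k : ℚ) ^ 4))) := by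
  rw [tele (p-1)]
  set H := harmonicNum (p-1) with hH
  constructor
  · rw [Rat.num_pow]
    obtain ⟨t, ht⟩ := harmonic_num_dvd p hp hp7
    exact ⟨(p:ℤ)^2 * t^4, by rw [ht]; ring⟩
  · rw [Rat.den_pow]
    intro hdvd
    have h1 : p ∣ H.den := hp.dvd_of_dvd_pow hdvd
    have h2 : p ∣ (p-1).factorial := h1.trans (harmonicNum_den_dvd (p-1))
    have := (Nat.Prime.dvd_factorial hp).mp h2
    omega
end
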